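/- arXiv:1705.05786 — 10 statements merged into one kernel-verified Lean document; each statement's English description precedes it below -/
import Mathlib

section
/- Let w be an infinite LSP word over a finite alphabet A. Then for every n ∈ ℕ, the factor complexity of w satisfies p_w(n+1) − p_w(n) ≤ #A − 1, where p_w(n) denotes the number of distinct factors of w of length n. -/
/-- `u` is a prefix of the infinite word `w`. -/
def PrefI {A : Type*} (u : List A) (w : ℕ → A) : Prop :=
  ∀ i (h : i < u.length), u[i] = w i

/-- `u` is a factor of the infinite word `w`. -/
def FactorI {A : Type*} (w : ℕ → A) (u : List A) : Prop :=
  ∃ k, ∀ i (h : i < u.length), u[i] = w (k + i)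

/-- The infinite word `w` is LSP: every left special factor of `w` is a prefix of `w`. -/
def LSPInf {A : Type*} (w : ℕ → A) : Prop :=
  ∀ (u : List A) (a b : A), a ≠ b → FactorI w (a :: u) → FactorI w (b :: u) → PrefI u w

/-- `f` is a bLSP morphism (given by its action on letters). -/
def IsBLSP {A : Type*} (f : A → List A) : Prop :=
  ∃ α, f α = [α] ∧ ∀ β, β ≠ α → ∃ γ, f β = f γ ++ [β]

/-- `v` is the image of the infinite word `w` under the non-erasing morphism `f`,
i.e. every finite concatenation `f (w 0) ++ ⋯ ++ f (w (n-1))` is a prefix of `v`. -/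
def IsImage {A B : Type*} (f : A → List B) (w : ℕ → A) (v : ℕ → B) : Prop :=
  ∀ n, PrefI (((List.range n).map w).flatMap f) v

/-- Factor complexity of an infinite word. -/
noncomputable def complexity {A : Type*} (w : ℕ → A) (n : ℕ) : ℕ :=
  {u : List A | u.length = n ∧ FactorI w u}.ncard
theorem lsp_complexity_increment {A : Type*} [Fintype A] (w : ℕ → A)
    (hw : LSPInf w) (n : ℕ) :
    complexity w (n + 1) - complexity w n ≤ Fintype.card A - 1 := by
  classical
  set P : List A := (List.range n).map w with hP
  have hPlen : P.length = n := by simp [hP]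
  have hPget : ∀ i (h : i < P.length), P[i] = w i := by
    intro i h; simp [hP]
  have hPfac : FactorI w P := ⟨0, by intro i h; simpa using hPget i h⟩
  set S : ℕ → Set (List A) := fun m => {u : List A | u.length = m ∧ FactorI w u} with hS
  have hfin : ∀ m, (S m).Finite := fun m =>
    (List.finite_length_eq A m).subset (fun u hu => hu.1)
  have huniq : ∀ u : List A, u.length = n → PrefI u w → u = P := by
    intro u hu hpre
    apply List.ext_getElem (by omega)
    intro i h1 h2
    rw [hpre i h1, hPget i h2]
  -- membership of cons
  have hconsmem : ∀ (a : A) (t : List A), (a :: t) ∈ S (n+1) → t ∈ S n := by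
    rintro a t ⟨hlen, k, hk⟩
    refine ⟨by simpa using hlen, k + 1, ?_⟩
    intro i h
    have h' : i + 1 < (a :: t).length := by simpa using Nat.succ_lt_succ h
    have := hk (i+1) h'
    rw [List.getElem_cons_succ] at this
    rw [this]; ring_nf
  set T1 : Set (List A) := {v | v ∈ S (n+1) ∧ v.tail = P} with hT1
  set T2 : Set (List A) := {v | v ∈ S (n+1) ∧ v.tail ≠ P} with hT2
  have hT1fin : T1.Finite := (hfin (n+1)).subset (fun v hv => hv.1)
  have hT2fin : T2.Finite := (hfin (n+1)).subset (fun v hv => hv.1)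
  have hcover : S (n+1) ⊆ T1 ∪ T2 := by
    intro v hv; by_cases h : v.tail = P
    · exact Or.inl ⟨hv, h⟩
    · exact Or.inr ⟨hv, h⟩
  -- T1 bound
  have hT1card : T1.ncard ≤ Fintype.card A := by
    have hsub : T1 ⊆ (fun a : A => a :: P) '' Set.univ := by
      rintro v ⟨hv, htl⟩
      rcases v with _ | ⟨a, t⟩
      · exact absurd hv.1 (by simp)
      · exact ⟨a, Set.mem_univ a, by simp at htl; rw [htl]⟩
    calc T1.ncard ≤ ((fun a : A => a :: P) '' Set.univ).ncard :=
          Set.ncard_le_ncard hsub (Set.finite_univ.image _)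
      _ ≤ (Set.univ : Set A).ncard := Set.ncard_image_le Set.finite_univ
      _ = Fintype.card A := by rw [Set.ncard_univ, Nat.card_eq_fintype_card]
  -- T2 bound
  have hT2card : T2.ncard ≤ (S n \ {P}).ncard := by
    have himg : (fun v : List A => v.tail) '' T2 ⊆ S n \ {P} := by
      rintro _ ⟨v, hv, rfl⟩
      rcases v with _ | ⟨a, t⟩
      · exact absurd hv.1.1 (by simp)
      · exact ⟨hconsmem a t hv.1, hv.2⟩
    have hinj : Set.InjOn (fun v : List A => v.tail) T2 := by
      intro v hv v' hv' h
      replace h : v.tail = v'.tail := h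
      rcases v with _ | ⟨a, t⟩
      · exact absurd hv.1.1 (by simp)
      rcases v' with _ | ⟨b, t'⟩
      · exact absurd hv'.1.1 (by simp)
      simp only [List.tail_cons] at h
      subst h
      by_cases hab : a = b
      · rw [hab]
      · exfalso
        apply hv.2
        show t = P
        apply huniq t (by have := hv.1.1; simp at this; omega)
        exact hw t a b hab hv.1.2 hv'.1.2
    calc T2.ncard = ((fun v : List A => v.tail) '' T2).ncard :=
          (Set.ncard_image_of_injOn hinj).symm
      _ ≤ (S n \ {P}).ncard := Set.ncard_le_ncard himg (hfin n).diff
  have hPmem : P ∈ S n := ⟨hPlen, hPfac⟩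
  have hdiff : (S n \ {P}).ncard = (S n).ncard - 1 :=
    Set.ncard_diff_singleton_of_mem hPmem
  have hSpos : 0 < (S n).ncard := (Set.ncard_pos (hfin n)).mpr ⟨P, hPmem⟩
  have hApos : 1 ≤ Fintype.card A := Fintype.card_pos_iff.mpr ⟨w 0⟩
  have hmain : (S (n+1)).ncard ≤ T1.ncard + T2.ncard :=
    calc (S (n+1)).ncard ≤ (T1 ∪ T2).ncard := Set.ncard_le_ncard hcover (hT1fin.union hT2fin)
      _ ≤ T1.ncard + T2.ncard := Set.ncard_union_le T1 T2
  have h1 : complexity w (n+1) = (S (n+1)).ncard := rfl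
  have h0 : complexity w n = (S n).ncard := rfl
  rw [h1, h0]
  omega
end

section
/- Every infinite LSP word w over a finite alphabet A is uniformly recurrent: for every factor u of w there exists N ∈ ℕ such that u is a factor of every factor of w of length N. -/
section Aux
variable {A : Type*}

/-- The factor of `w` of length `m` starting at position `p`. -/
def wseg (w : ℕ → A) (p m : ℕ) : List A := (List.range m).map (fun i => w (p + i))

@[simp] lemma wseg_length (w : ℕ → A) (p m : ℕ) : (wseg w p m).length = m := by
  simp [wseg]

@[simp] lemma wseg_getElem (w : ℕ → A) (p m i : ℕ) (h : i < (wseg w p m).length) :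
    (wseg w p m)[i] = w (p + i) := by
  simp [wseg]

lemma wseg_eq_iff {w : ℕ → A} {p q m : ℕ} :
    wseg w p m = wseg w q m ↔ ∀ i < m, w (p + i) = w (q + i) := by
  constructor
  · intro h i hi
    have h1 : i < (wseg w p m).length := by simpa using hi
    have := List.getElem_of_eq h h1
    simpa using this
  · intro h
    apply List.ext_getElem (by simp)
    intro i h1 h2
    simp only [wseg_getElem]
    exact h i (by simpa using h1)

lemma wseg_add (w : ℕ → A) (p a b : ℕ) :
    wseg w p (a + b) = wseg w p a ++ wseg w (p + a) b := by
  apply List.ext_getElem (by simp)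
  intro i h1 h2
  rcases Nat.lt_or_ge i a with hi | hi
  · rw [List.getElem_append_left (by simpa using hi)]
    simp
  · rw [List.getElem_append_right (by simpa using hi)]
    simp only [wseg_getElem, wseg_length]
    congr 1
    omega

lemma wseg_infix {w : ℕ → A} {k N s m : ℕ} (h1 : k ≤ s) (h2 : s + m ≤ k + N) :
    wseg w s m <:+: wseg w k N := by
  obtain ⟨a, rfl⟩ : ∃ a, s = k + a := ⟨s - k, by omega⟩
  obtain ⟨b, rfl⟩ : ∃ b, N = a + (m + b) := ⟨N - a - m, by omega⟩
  refine ⟨wseg w k a, wseg w (k + a + m) b, ?_⟩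
  rw [wseg_add, wseg_add, List.append_assoc]

/-- A factor of `w` equals a segment of `w`. -/
lemma factor_eq_wseg {w : ℕ → A} {u : List A} (h : FactorI w u) :
    ∃ k, u = wseg w k u.length := by
  obtain ⟨k, hk⟩ := h
  refine ⟨k, List.ext_getElem (by simp) fun i h1 h2 => ?_⟩
  rw [wseg_getElem]
  exact hk i h1

lemma wseg_factor (w : ℕ → A) (p m : ℕ) : FactorI w (wseg w p m) :=
  ⟨p, fun i h => by rw [wseg_getElem]⟩

/-- Key step: if a factor of length `m` is not the prefix of length `m`, then all its
occurrences (at positions ≥ 1) are preceded by the same letter; hence the segment one step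
to the left is determined. -/
lemma lsp_step {w : ℕ → A} (hw : LSPInf w) {m t₁ t₂ : ℕ} (h₁ : 1 ≤ t₁) (h₂ : 1 ≤ t₂)
    (heq : wseg w t₁ m = wseg w t₂ m) (hne : wseg w t₁ m ≠ wseg w 0 m) :
    wseg w (t₁ - 1) m = wseg w (t₂ - 1) m := by
  rcases Nat.eq_zero_or_pos m with hm | hm
  · subst hm; rfl
  have hent : ∀ i < m, w (t₁ + i) = w (t₂ + i) := wseg_eq_iff.1 heq
  have hab : w (t₁ - 1) = w (t₂ - 1) := by
    by_contra hne2
    have hf1 : FactorI w (w (t₁ - 1) :: wseg w t₁ m) := by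
      refine ⟨t₁ - 1, fun i h => ?_⟩
      match i with
      | 0 => simp
      | j + 1 =>
        have hj : j < m := by simpa using h
        simp only [List.getElem_cons_succ, wseg_getElem (h := by simpa using hj)]
        congr 1; omega
    have hf2 : FactorI w (w (t₂ - 1) :: wseg w t₁ m) := by
      refine ⟨t₂ - 1, fun i h => ?_⟩
      match i with
      | 0 => simp
      | j + 1 =>
        have hj : j < m := by simpa using h
        simp only [List.getElem_cons_succ, wseg_getElem (h := by simpa using hj)]
        rw [hent j hj]; congr 1; omega
    have hpref := hw (wseg w t₁ m) _ _ hne2 hf1 hf2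
    apply hne
    rw [wseg_eq_iff]
    intro i hi
    have := hpref i (by simpa using hi)
    rw [wseg_getElem] at this
    simpa using this
  rw [wseg_eq_iff]
  intro i hi
  match i with
  | 0 => simpa using hab
  | j + 1 =>
    have : t₁ - 1 + (j + 1) = t₁ + j := by omega
    rw [this]
    have : t₂ - 1 + (j + 1) = t₂ + j := by omega
    rw [this]
    exact hent j (by omega)

/-- The prefix of length `m` occurs within a bounded distance before every position. -/
lemma prefix_gaps [Fintype A] {w : ℕ → A} (hw : LSPInf w) (m k : ℕ) :
    ∃ s, s ≤ k ∧ k ≤ s + (Fintype.card A) ^ m ∧ wseg w s m = wseg w 0 m := by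
  classical
  set V := (Fintype.card A) ^ m with hV
  by_contra hC
  push_neg at hC
  -- if k ≤ V, take s = 0
  have hkV : V < k := by
    by_contra hk
    exact hC 0 (Nat.zero_le _) (by omega) rfl
  -- all segments at positions in [k - V, k] differ from the prefix
  have H : ∀ r, k - V ≤ r → r ≤ k → wseg w r m ≠ wseg w 0 m := by
    intro r hr1 hr2
    exact hC r hr2 (by omega)
  -- pigeonhole among positions k - j, j ≤ V
  have hcard : Fintype.card (Fin m → A) < Fintype.card (Fin (V + 1)) := by
    simp [Fintype.card_fun, hV]
  obtain ⟨j₁, j₂, hjne, hjeq⟩ :=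
    Fintype.exists_ne_map_eq_of_card_lt
      (fun (j : Fin (V + 1)) (i : Fin m) => w (k - j.val + i.val)) hcard
  -- wlog j₁ < j₂
  wlog hlt : (j₁ : ℕ) < (j₂ : ℕ) generalizing j₁ j₂
  · exact this j₂ j₁ hjne.symm hjeq.symm
      (by rcases Nat.lt_trichotomy (j₁ : ℕ) (j₂ : ℕ) with h | h | h
          · exact absurd h hlt
          · exact absurd (Fin.ext h) hjne
          · exact h)
  set q₁ := k - (j₂ : ℕ) with hq₁
  set q₂ := k - (j₁ : ℕ) with hq₂
  have hj₂V : (j₂ : ℕ) ≤ V := by omega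
  have hq : wseg w q₁ m = wseg w q₂ m := by
    rw [wseg_eq_iff]
    intro i hi
    exact (congrFun hjeq ⟨i, hi⟩).symm
  have hq12 : q₁ < q₂ := by
    have := j₂.isLt
    omega
  have Hq : ∀ r, q₁ ≤ r → r ≤ q₂ → wseg w r m ≠ wseg w 0 m := by
    intro r hr1 hr2
    exact H r (by omega) (by omega)
  -- backward chain: for each t ≤ q₂, the segment at q₂ - t equals one at position in [q₁, q₂]
  have chain : ∀ t, t ≤ q₂ → ∃ r, q₁ ≤ r ∧ r ≤ q₂ ∧ wseg w (q₂ - t) m = wseg w r m := by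
    intro t
    induction t with
    | zero => exact fun _ => ⟨q₂, le_of_lt hq12, le_refl _, by rw [Nat.sub_zero]⟩
    | succ t ih =>
      intro ht
      obtain ⟨r, hr1, hr2, hre⟩ := ih (by omega)
      -- replace r by r' > q₁ with the same segment
      obtain ⟨r', hr'1, hr'2, hre'⟩ : ∃ r', q₁ < r' ∧ r' ≤ q₂ ∧ wseg w (q₂ - t) m = wseg w r' m := by
        by_cases hrq : r = q₁
        · exact ⟨q₂, hq12, le_refl _, by rw [hre, hrq, hq]⟩
        · exact ⟨r, by omega, hr2, hre⟩
      have hstep := lsp_step hw (t₁ := q₂ - t) (t₂ := r') (by omega) (by omega) hre'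
        (by rw [hre']; exact Hq r' (by omega) hr'2)
      refine ⟨r' - 1, by omega, by omega, ?_⟩
      have : q₂ - (t + 1) = q₂ - t - 1 := by omega
      rw [this]
      exact hstep
  obtain ⟨r, hr1, hr2, hre⟩ := chain q₂ (le_refl _)
  rw [Nat.sub_self] at hre
  exact Hq r hr1 hr2 hre.symm

end Aux

theorem lsp_uniformly_recurrent {A : Type*} [Fintype A] (w : ℕ → A)
    (hw : LSPInf w) (u : List A) (hu : FactorI w u) :
    ∃ N : ℕ, ∀ v : List A, FactorI w v → v.length = N → u <:+: v := by
  obtain ⟨k₀, hk₀⟩ := factor_eq_wseg hu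
  set n := u.length with hn
  set m := k₀ + n with hm
  set V := (Fintype.card A) ^ m with hV
  refine ⟨V + m, fun v hv hvlen => ?_⟩
  obtain ⟨k, hk⟩ := factor_eq_wseg hv
  rw [hvlen] at hk
  -- u is an infix of the prefix of length m
  have hup : u <:+: wseg w 0 m := by
    rw [hk₀]
    exact wseg_infix (Nat.zero_le _) (by omega)
  -- the prefix of length m occurs inside v
  obtain ⟨s, hs1, hs2, hs3⟩ := prefix_gaps hw m (k + V)
  have hsk : k ≤ s := by omega
  have hocc : wseg w s m <:+: wseg w k (V + m) := wseg_infix hsk (by omega)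
  rw [hk]
  exact hup.trans (hs3 ▸ hocc)
end

section
/- Let f be a bLSP morphism of A*. Then the set {f(β) : β ∈ A} is a suffix code: for any two distinct letters β, γ ∈ A, f(β) is not a suffix of f(γ). -/
theorem bLSP_suffix_code {A : Type*} (f : A → List A) (hf : IsBLSP f)
    (β γ : A) (hβγ : β ≠ γ) : ¬ f β <:+ f γ := by
  obtain ⟨α, hα, hother⟩ := hf
  have key : ∀ b, (f b).getLast? = some b := by
    intro b
    by_cases hb : b = α
    · subst hb; rw [hα]; rfl
    · obtain ⟨c, hc⟩ := hother b hb
      rw [hc, List.getLast?_concat]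
  intro hsuf
  have h1 := key β
  have h2 := key γ
  have hne : f β ≠ [] := by intro h; rw [h] at h1; simp at h1
  obtain ⟨t, ht⟩ := hsuf
  rw [← ht, List.getLast?_append_of_ne_nil _ hne, h1] at h2
  exact hβγ (Option.some.inj h2)
end

section
/- Every bLSP morphism f of A* is injective, both as a map on finite words (from A* to A*) and as a map on infinite words (from functions ℕ → A to functions ℕ → A, where f is applied to an infinite word by concatenating the images of its letters). -/
theorem bLSP_injective {A : Type*} (f : A → List A) (hf : IsBLSP f) :
    Function.Injective (fun l : List A => l.flatMap f) ∧
      ∀ w w' v : ℕ → A, IsImage f w v → IsImage f w' v → w = w' := by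
  obtain ⟨α, hα, hstep⟩ := hf
  -- basic facts
  have hne : ∀ β, f β ≠ [] := by
    intro β
    by_cases hβ : β = α
    · subst hβ; rw [hα]; simp
    · obtain ⟨γ, hγ⟩ := hstep β hβ; rw [hγ]; simp
  have hlast : ∀ β, (f β).getLast? = some β := by
    intro β
    by_cases hβ : β = α
    · subst hβ; rw [hα]; rfl
    · obtain ⟨γ, hγ⟩ := hstep β hβ; rw [hγ, List.getLast?_concat]
  have hhead : ∀ n β, (f β).length ≤ n → ∃ t, f β = α :: t := by
    intro n
    induction n with
    | zero =>
      intro β h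
      exact absurd (List.eq_nil_of_length_eq_zero (Nat.le_zero.mp h)) (hne β)
    | succ n ih =>
      intro β h
      by_cases hβ : β = α
      · subst hβ; exact ⟨[], hα⟩
      · obtain ⟨γ, hγ⟩ := hstep β hβ
        have hlen : (f γ).length ≤ n := by
          rw [hγ, List.length_append] at h; simp at h; omega
        obtain ⟨t, ht⟩ := ih γ hlen
        exact ⟨t ++ [β], by rw [hγ, ht]; rfl⟩
  have hint : ∀ n β i (hi : i < (f β).length), 0 < i → (f β).length ≤ n →
      (f β)[i] ≠ α := by
    intro n
    induction n with
    | zero =>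
      intro β i hi _ h
      omega
    | succ n ih =>
      intro β i hi hpos h
      by_cases hβ : β = α
      · subst hβ
        rw [hα] at hi
        simp at hi
        omega
      · obtain ⟨γ, hγ⟩ := hstep β hβ
        have hlen : (f γ).length + 1 ≤ n + 1 := by
          rw [hγ, List.length_append] at h; simpa using h
        rcases lt_or_ge i (f γ).length with hlt | hge
        · have : (f β)[i]'hi = (f γ)[i]'hlt := by
            simp only [hγ]
            rw [List.getElem_append_left hlt]
          rw [this]
          exact ih γ i hlt hpos (by omega)
        · have hilen : i = (f γ).length := by
            rw [hγ, List.length_append] at hi; simp at hi; omega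
          have : (f β)[i]'hi = β := by
            simp only [hγ]
            rw [List.getElem_append_right hge]
            simp [hilen]
          rw [this]
          exact hβ
  -- finite injectivity
  have key : ∀ l l' : List A, l.flatMap f = l'.flatMap f → l = l' := by
    intro l
    induction l using List.reverseRecOn with
    | nil =>
      intro l' h
      cases l' with
      | nil => rfl
      | cons a t =>
        exfalso
        rw [List.flatMap_nil, List.flatMap_cons] at h
        exact hne a (List.append_eq_nil_iff.mp h.symm).1
    | append_singleton t a ih =>
      intro l' h
      cases l' using List.reverseRecOn with
      | nil =>
        exfalso
        rw [List.flatMap_nil, List.flatMap_append, List.flatMap_singleton] at h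
        exact hne a (List.append_eq_nil_iff.mp h).2
      | append_singleton t' a' =>
        rw [List.flatMap_append, List.flatMap_append, List.flatMap_singleton,
          List.flatMap_singleton] at h
        have haa : a = a' := by
          have h1 : (t.flatMap f ++ f a).getLast? = some a := by
            rw [List.getLast?_append_of_ne_nil _ (hne a)]; exact hlast a
          have h2 : (t'.flatMap f ++ f a').getLast? = some a' := by
            rw [List.getLast?_append_of_ne_nil _ (hne a')]; exact hlast a'
          rw [h] at h1
          rw [h1] at h2
          exact Option.some_injective _ h2
        subst haa
        have ht : t = t' := ih t' (List.append_cancel_right h)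
        rw [ht]
  refine ⟨fun l l' h => key l l' h, ?_⟩
  -- infinite injectivity
  intro w w' v hw hw'
  have himg : ∀ (u : ℕ → A), IsImage f u v → ∀ m i (hi : i < (f (u m)).length),
      (f (u m))[i] = v ((((List.range m).map u).flatMap f).length + i) := by
    intro u hu m i hi
    set p := ((List.range m).map u).flatMap f with hp
    have hr : ((List.range (m+1)).map u).flatMap f = p ++ f (u m) := by
      rw [List.range_succ, List.map_append, List.flatMap_append]
      simp [hp]
    have hb : p.length + i < (((List.range (m+1)).map u).flatMap f).length := by
      rw [hr, List.length_append]; omega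
    have h := hu (m+1) (p.length + i) hb
    rw [← h]
    rw [List.getElem_of_eq hr]
    rw [List.getElem_append_right (Nat.le_add_right _ _)]
    simp
  have hlensucc : ∀ (u : ℕ → A) m,
      (((List.range (m+1)).map u).flatMap f).length
        = (((List.range m).map u).flatMap f).length + (f (u m)).length := by
    intro u m
    rw [List.range_succ, List.map_append, List.flatMap_append, List.length_append]
    simp
  have hnext : ∀ (u : ℕ → A), IsImage f u v → ∀ m,
      v ((((List.range m).map u).flatMap f).length + (f (u m)).length) = α := by
    intro u hu m
    have h0 : 0 < (f (u (m+1))).length := List.length_pos_iff.mpr (hne _)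
    have h := himg u hu (m+1) 0 h0
    obtain ⟨t, ht⟩ := hhead (f (u (m+1))).length (u (m+1)) le_rfl
    have hval : (f (u (m+1)))[0]'h0 = α := by
      simp only [ht, List.getElem_cons_zero]
    rw [hval, Nat.add_zero, hlensucc u m] at h
    exact h.symm
  funext n
  induction n using Nat.strong_induction_on with
  | _ n ih =>
  have hp' : ((List.range n).map w') = ((List.range n).map w) := by
    apply List.map_congr_left
    intro m hm
    exact (ih m (List.mem_range.mp hm)).symm
  set L := (((List.range n).map w).flatMap f).length with hL
  have ha : ∀ i (hi : i < (f (w n)).length), (f (w n))[i] = v (L + i) := himg w hw n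
  have hb : ∀ i (hi : i < (f (w' n)).length), (f (w' n))[i] = v (L + i) := by
    intro i hi
    have := himg w' hw' n i hi
    rwa [hp'] at this
  have hnexta : v (L + (f (w n)).length) = α := hnext w hw n
  have hnextb : v (L + (f (w' n)).length) = α := by
    have := hnext w' hw' n
    rwa [hp'] at this
  have core : ∀ a b : A,
      (∀ i (hi : i < (f a).length), (f a)[i] = v (L + i)) →
      (∀ i (hi : i < (f b).length), (f b)[i] = v (L + i)) →
      v (L + (f a).length) = α → (f a).length ≤ (f b).length → a = b := by
    intro a b ha hb hnx hle
    rcases eq_or_lt_of_le hle with heq | hlt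
    · have hfe : f a = f b := by
        apply List.ext_getElem heq
        intro i h1 h2
        rw [ha i h1, hb i h2]
      have h1 := hlast a
      rw [hfe, hlast b] at h1
      exact (Option.some_injective _ h1).symm
    · exfalso
      have h1 : (f b)[(f a).length]'hlt = v (L + (f a).length) := hb _ hlt
      have h2 : (f b)[(f a).length]'hlt ≠ α :=
        hint (f b).length b (f a).length hlt (List.length_pos_iff.mpr (hne a)) le_rfl
      exact h2 (h1.trans hnx)
  rcases le_total (f (w n)).length (f (w' n)).length with hle | hle
  · exact core (w n) (w' n) ha hb hnexta hle
  · exact (core (w' n) (w n) hb ha hnextb hle).symm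
end

section
/- If the alphabet A has cardinality n ≥ 1, then the number of bLSP morphisms of A* is exactly n^(n−1). -/
namespace CardBLSP

/-- `g^[m]` is constantly `c`. -/
def Grounded {α : Type*} (m : ℕ) (g : α → α) : Prop := ∃ c, ∀ a, g^[m] a = c

section Reach
variable {α : Type*} [Fintype α] (h : α → α) (r : α)

/-- If every point reaches a fixed point `r`, it does so within `card - 1` steps. -/
theorem reach_fix (hr : h r = r) (hreach : ∀ a, ∃ m, h^[m] a = r) (a : α) :
    h^[Fintype.card α - 1] a = r := by
  set N := Fintype.card α with hN
  have hNpos : 0 < N := Fintype.card_pos_iff.2 ⟨a⟩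
  classical
  have hex := hreach a
  set m := Nat.find hex with hm
  have hmf : h^[m] a = r := Nat.find_spec hex
  have hmle : m ≤ N - 1 := by
    by_contra hlt
    push_neg at hlt
    have hmN : N ≤ m := by omega
    -- pigeonhole on h^[0..m] a
    have hcard : Fintype.card α < Fintype.card (Fin (m + 1)) := by simp; omega
    obtain ⟨i, j, hij, hfe⟩ := Fintype.exists_ne_map_eq_of_card_lt
      (fun i : Fin (m + 1) => h^[(i : ℕ)] a) hcard
    -- wlog i < j
    rcases lt_or_gt_of_ne (fun hc => hij (Fin.ext hc) : (i:ℕ) ≠ (j:ℕ)) with hlt' | hlt'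
    · have hjm : (j : ℕ) ≤ m := by omega
      have : h^[m - (j:ℕ) + (i:ℕ)] a = r := by
        have : h^[m - (j:ℕ)] (h^[(j:ℕ)] a) = r := by
          rw [← Function.iterate_add_apply]
          rwa [Nat.sub_add_cancel hjm]
        rw [← hfe] at this
        rwa [← Function.iterate_add_apply] at this
      exact absurd this (Nat.find_min hex (by omega))
    · have hjm : (i : ℕ) ≤ m := by omega
      have : h^[m - (i:ℕ) + (j:ℕ)] a = r := by
        have : h^[m - (i:ℕ)] (h^[(i:ℕ)] a) = r := by
          rw [← Function.iterate_add_apply]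
          rwa [Nat.sub_add_cancel hjm]
        rw [hfe] at this
        rwa [← Function.iterate_add_apply] at this
      exact absurd this (Nat.find_min hex (by omega))
  calc h^[N-1] a = h^[(N-1-m) + m] a := by rw [Nat.sub_add_cancel hmle]
    _ = h^[N-1-m] (h^[m] a) := Function.iterate_add_apply ..
    _ = r := by rw [hmf]; exact Function.iterate_fixed hr _

end Reach

section Per
variable {α : Type*} (g : α → α)

/-- `a` is a periodic point of `g`. -/
def IsPer (a : α) : Prop := ∃ k, 0 < k ∧ g^[k] a = a

variable {g}

theorem IsPer.apply {a : α} (h : IsPer g a) : IsPer g (g a) := by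
  obtain ⟨k, hk, hka⟩ := h
  exact ⟨k, hk, by rw [← Function.iterate_succ_apply, Function.iterate_succ_apply', hka]⟩

theorem IsPer.iterate {a : α} (h : IsPer g a) (i : ℕ) : IsPer g (g^[i] a) := by
  induction i with
  | zero => exact h
  | succ i ih => rw [Function.iterate_succ_apply']; exact ih.apply

theorem IsPer.mul {a : α} {k : ℕ} (hk : g^[k] a = a) (t : ℕ) : g^[k * t] a = a := by
  induction t with
  | zero => simp
  | succ t ih => rw [Nat.mul_succ, Function.iterate_add_apply, hk, ih]

theorem IsPer.pre {a : α} (h : IsPer g a) : ∃ b, IsPer g b ∧ g b = a := by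
  obtain ⟨k, hk, hka⟩ := h
  have hP : IsPer g a := ⟨k, hk, hka⟩
  refine ⟨g^[k-1] a, hP.iterate _, ?_⟩
  have : g^[k-1+1] a = a := by rwa [Nat.sub_add_cancel hk]
  rwa [Function.iterate_succ_apply'] at this

theorem IsPer.inj {a b : α} (ha : IsPer g a) (hb : IsPer g b) (hab : g a = g b) : a = b := by
  obtain ⟨k, hk, hka⟩ := ha
  obtain ⟨l, hl, hlb⟩ := hb
  have hKa : g^[k * l] a = a := IsPer.mul hka l
  have hKb : g^[k * l] b = b := by rw [mul_comm]; exact IsPer.mul hlb k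
  have hK1 : 1 ≤ k * l := Nat.one_le_iff_ne_zero.2 (by positivity)
  have h1 : g^[k*l - 1 + 1] a = g^[k*l - 1 + 1] b := by
    rw [Function.iterate_succ_apply, Function.iterate_succ_apply, hab]
  rw [Nat.sub_add_cancel hK1] at h1
  rwa [hKa, hKb] at h1

theorem exists_iterate_isPer [Fintype α] (g : α → α) (a : α) : ∃ m, IsPer g (g^[m] a) := by
  have hcard : Fintype.card α < Fintype.card (Fin (Fintype.card α + 1)) := by simp
  obtain ⟨i, j, hij, hfe⟩ := Fintype.exists_ne_map_eq_of_card_lt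
    (fun i : Fin (Fintype.card α + 1) => g^[(i : ℕ)] a) hcard
  rcases lt_or_gt_of_ne (fun hc => hij (Fin.ext hc) : (i:ℕ) ≠ (j:ℕ)) with hlt | hlt
  · refine ⟨i, (j : ℕ) - i, by omega, ?_⟩
    rw [← Function.iterate_add_apply, Nat.sub_add_cancel (by omega)]
    exact hfe.symm
  · refine ⟨j, (i : ℕ) - j, by omega, ?_⟩
    rw [← Function.iterate_add_apply, Nat.sub_add_cancel (by omega)]
    exact hfe

end Per

section ListNext
variable {β : Type*} [DecidableEq β]

/-- successor in a list, with fallback `a`. -/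
def nextD (L : List β) (a : β) : β := L.getD (L.idxOf a + 1) a

theorem nextD_getElem {L : List β} (hL : L.Nodup) {i : ℕ} (hi : i + 1 < L.length) :
    nextD L (L[i]'(by omega)) = L[i+1] := by
  unfold nextD
  rw [hL.idxOf_getElem i (by omega), List.getD_eq_getElem L _ hi]

theorem nextD_last {L : List β} (hL : L.Nodup) (hne : L ≠ []) :
    nextD L (L.getLast hne) = L.getLast hne := by
  unfold nextD
  have hlen : 0 < L.length := List.length_pos_iff.2 hne
  have h1 : L.getLast hne = L[L.length - 1] := L.getLast_eq_getElem hne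
  rw [h1, hL.idxOf_getElem _ (by omega), List.getD_eq_default]
  omega

/-- climbing a nodup list with a function that acts as `nextD` on it reaches the last element. -/
theorem climb {L : List β} (hL : L.Nodup) (hne : L ≠ []) (f : β → β)
    (hf : ∀ a ∈ L, f a = nextD L a) :
    ∀ k i (hi : i < L.length), i + k = L.length - 1 → f^[k] (L[i]'hi) = L.getLast hne := by
  intro k
  induction k with
  | zero =>
    intro i hi he
    simp only [Function.iterate_zero, id]
    have hi' : i = L.length - 1 := by omega
    subst hi'
    rw [L.getLast_eq_getElem hne]
  | succ k ih =>
    intro i hi he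
    have hi1 : i + 1 < L.length := by omega
    rw [Function.iterate_succ_apply, hf _ (List.getElem_mem hi), nextD_getElem hL hi1]
    exact ih (i+1) hi1 (by omega)

theorem reach_last {L : List β} (hL : L.Nodup) (hne : L ≠ []) (f : β → β)
    (hf : ∀ a ∈ L, f a = nextD L a) {a : β} (ha : a ∈ L) :
    ∃ m, f^[m] a = L.getLast hne := by
  obtain ⟨i, hi, rfl⟩ := List.getElem_of_mem ha
  exact ⟨L.length - 1 - i, climb hL hne f hf _ i hi (by omega)⟩

end ListNext

section FinWorld
variable {n : ℕ}

open Classical in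
noncomputable def perFinset (g : Fin n → Fin n) : Finset (Fin n) :=
  Finset.univ.filter (IsPer g)

noncomputable def Mlist (g : Fin n → Fin n) : List (Fin n) := (perFinset g).sort (· ≤ ·)

noncomputable def Llist (g : Fin n → Fin n) : List (Fin n) := (Mlist g).map g

variable (g : Fin n → Fin n)

theorem mem_Mlist {a : Fin n} : a ∈ Mlist g ↔ IsPer g a := by
  classical
  simp [Mlist, perFinset, Finset.mem_sort, Finset.mem_filter]

theorem nodup_Mlist : (Mlist g).Nodup := (perFinset g).sort_nodup _

theorem mem_Llist {a : Fin n} : a ∈ Llist g ↔ IsPer g a := by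
  constructor
  · rintro h
    obtain ⟨b, hb, rfl⟩ := List.mem_map.1 h
    exact ((mem_Mlist g).1 hb).apply
  · intro h
    obtain ⟨b, hb, rfl⟩ := h.pre
    exact List.mem_map.2 ⟨b, (mem_Mlist g).2 hb, rfl⟩

theorem nodup_Llist : (Llist g).Nodup :=
  (nodup_Mlist g).map_on (fun x hx y hy hxy =>
    IsPer.inj ((mem_Mlist g).1 hx) ((mem_Mlist g).1 hy) hxy)

theorem length_Llist : (Llist g).length = (Mlist g).length := List.length_map _

/-- The Joyal "successor along the cycle listing" function. -/
noncomputable def hFun : Fin n → Fin n :=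
  fun a => if a ∈ Llist g then nextD (Llist g) a else g a

theorem llist_ne_nil (hn : 0 < n) : Llist g ≠ [] := by
  have : ∃ m, IsPer g (g^[m] (⟨0, hn⟩ : Fin n)) := exists_iterate_isPer g _
  obtain ⟨m, hm⟩ := this
  intro hc
  have := (mem_Llist g).2 hm
  rw [hc] at this
  simp at this

theorem hFun_mem {a : Fin n} (ha : a ∈ Llist g) : hFun g a = nextD (Llist g) a := if_pos ha

theorem hFun_not_mem {a : Fin n} (ha : a ∉ Llist g) : hFun g a = g a := if_neg ha

theorem hFun_enter (a : Fin n) : ∃ m, (hFun g)^[m] a ∈ Llist g := by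
  classical
  have hex := exists_iterate_isPer g a
  set m := Nat.find hex with hm
  refine ⟨m, ?_⟩
  have hiter : ∀ i ≤ m, (hFun g)^[i] a = g^[i] a := by
    intro i hi
    induction i with
    | zero => simp
    | succ i ih =>
      have hi' : i ≤ m := by omega
      have hnotper : ¬ IsPer g (g^[i] a) := Nat.find_min hex (by omega)
      rw [Function.iterate_succ_apply', ih hi', Function.iterate_succ_apply',
        hFun_not_mem g (fun hc => hnotper ((mem_Llist g).1 hc))]
  rw [hiter m le_rfl]
  exact (mem_Llist g).2 (Nat.find_spec hex)

theorem hFun_reach (hn : 0 < n) (a : Fin n) :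
    ∃ m, (hFun g)^[m] a = (Llist g).getLast (llist_ne_nil g hn) := by
  obtain ⟨m1, hm1⟩ := hFun_enter g a
  obtain ⟨m2, hm2⟩ := reach_last (nodup_Llist g) (llist_ne_nil g hn) (hFun g)
    (fun b hb => hFun_mem g hb) hm1
  exact ⟨m2 + m1, by rw [Function.iterate_add_apply, hm2]⟩

theorem hFun_last_fixed (hn : 0 < n) :
    hFun g ((Llist g).getLast (llist_ne_nil g hn)) = (Llist g).getLast (llist_ne_nil g hn) := by
  rw [hFun_mem g (List.getLast_mem _), nextD_last (nodup_Llist g)]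

theorem hFun_grounded (hn : 0 < n) : Grounded (n - 1) (hFun g) := by
  refine ⟨(Llist g).getLast (llist_ne_nil g hn), fun a => ?_⟩
  have := reach_fix (hFun g) _ (hFun_last_fixed g hn) (hFun_reach g hn) a
  simpa using this

end FinWorld
section Phi
variable {n : ℕ}

open Classical in
noncomputable def depth (h : Fin n → Fin n) (v : Fin n) : ℕ :=
  Nat.find (⟨n-1, rfl⟩ : ∃ i, h^[i] v = h^[n-1] v)

noncomputable def Plist (h : Fin n → Fin n) (v : Fin n) : List (Fin n) :=
  (List.range (depth h v + 1)).map (fun i => h^[i] v)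

noncomputable def Slist (h : Fin n → Fin n) (v : Fin n) : List (Fin n) :=
  (Plist h v).toFinset.sort (· ≤ ·)

noncomputable def phiFun (h : Fin n → Fin n) (v : Fin n) : Fin n → Fin n :=
  fun a => if a ∈ Plist h v then (Plist h v).getD ((Slist h v).idxOf a) a else h a

variable (h : Fin n → Fin n) (v : Fin n)

theorem depth_spec : h^[depth h v] v = h^[n-1] v := by
  classical
  exact Nat.find_spec (⟨n-1, rfl⟩ : ∃ i, h^[i] v = h^[n-1] v)

theorem depth_min {i : ℕ} (hi : i < depth h v) : h^[i] v ≠ h^[n-1] v := by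
  classical
  exact Nat.find_min (⟨n-1, rfl⟩ : ∃ i, h^[i] v = h^[n-1] v) hi

theorem length_Plist : (Plist h v).length = depth h v + 1 := by
  simp [Plist]

theorem Plist_getElem {i : ℕ} (hi : i < (Plist h v).length) : (Plist h v)[i] = h^[i] v := by
  simp only [Plist, List.getElem_map, List.getElem_range]

theorem mem_Plist {a : Fin n} : a ∈ Plist h v ↔ ∃ i, i ≤ depth h v ∧ h^[i] v = a := by
  simp only [Plist, List.mem_map, List.mem_range]
  constructor
  · rintro ⟨i, hi, rfl⟩; exact ⟨i, by omega, rfl⟩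
  · rintro ⟨i, hi, rfl⟩; exact ⟨i, by omega, rfl⟩

theorem nodup_Plist : (Plist h v).Nodup := by
  rw [List.nodup_iff_injective_get]
  rintro ⟨i, hi⟩ ⟨j, hj⟩ hij
  simp only [List.get_eq_getElem, Plist_getElem h v] at hij
  rw [length_Plist] at hi hj
  by_contra hne
  have hne' : i ≠ j := fun hc => hne (Fin.ext hc)
  -- wlog i < j
  rcases lt_or_gt_of_ne hne' with hlt | hlt
  · have : h^[depth h v - j + i] v = h^[n-1] v := by
      have h1 : h^[depth h v - j] (h^[j] v) = h^[n-1] v := by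
        rw [← Function.iterate_add_apply, Nat.sub_add_cancel (by omega)]
        exact depth_spec h v
      rw [← hij] at h1
      rwa [← Function.iterate_add_apply] at h1
    exact depth_min h v (by omega) this
  · have : h^[depth h v - i + j] v = h^[n-1] v := by
      have h1 : h^[depth h v - i] (h^[i] v) = h^[n-1] v := by
        rw [← Function.iterate_add_apply, Nat.sub_add_cancel (by omega)]
        exact depth_spec h v
      rw [hij] at h1
      rwa [← Function.iterate_add_apply] at h1
    exact depth_min h v (by omega) this

theorem mem_Slist {a : Fin n} : a ∈ Slist h v ↔ a ∈ Plist h v := by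
  simp [Slist, Finset.mem_sort]

theorem nodup_Slist : (Slist h v).Nodup := Finset.sort_nodup _ _

theorem length_Slist : (Slist h v).length = (Plist h v).length := by
  rw [Slist, Finset.length_sort, List.toFinset_card_of_nodup (nodup_Plist h v)]

theorem phiFun_mem {a : Fin n} (ha : a ∈ Plist h v) :
    phiFun h v a = (Plist h v)[(Slist h v).idxOf a]'(by
      rw [← length_Slist]; exact List.idxOf_lt_length_iff.2 ((mem_Slist h v).2 ha)) := by
  rw [phiFun, if_pos ha, List.getD_eq_getElem]

theorem phiFun_not_mem {a : Fin n} (ha : a ∉ Plist h v) : phiFun h v a = h a := if_neg ha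

theorem phiFun_getElem {j : ℕ} (hj : j < (Slist h v).length) :
    phiFun h v ((Slist h v)[j]) = (Plist h v)[j]'(by rwa [← length_Slist]) := by
  have hmem : (Slist h v)[j] ∈ Plist h v := (mem_Slist h v).1 (List.getElem_mem hj)
  rw [phiFun_mem h v hmem]
  congr 1
  exact (nodup_Slist h v).idxOf_getElem j hj

theorem phiFun_maps {a : Fin n} (ha : a ∈ Plist h v) : phiFun h v a ∈ Plist h v := by
  rw [phiFun_mem h v ha]; exact List.getElem_mem _

theorem phiFun_iterate_maps {a : Fin n} (ha : a ∈ Plist h v) (k : ℕ) :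
    (phiFun h v)^[k] a ∈ Plist h v := by
  induction k with
  | zero => exact ha
  | succ k ih => rw [Function.iterate_succ_apply']; exact phiFun_maps h v ih

theorem phiFun_injOn {a b : Fin n} (ha : a ∈ Plist h v) (hb : b ∈ Plist h v)
    (hab : phiFun h v a = phiFun h v b) : a = b := by
  have ha' := (mem_Slist h v).2 ha
  have hb' := (mem_Slist h v).2 hb
  rw [phiFun_mem h v ha, phiFun_mem h v hb] at hab
  have hidx : (Slist h v).idxOf a = (Slist h v).idxOf b :=
    ((nodup_Plist h v).getElem_inj_iff).1 hab
  calc a = (Slist h v)[(Slist h v).idxOf a]'(List.idxOf_lt_length_iff.2 ha') :=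
        (List.getElem_idxOf _).symm
    _ = (Slist h v)[(Slist h v).idxOf b]'(List.idxOf_lt_length_iff.2 hb') := by
        congr 1
    _ = b := List.getElem_idxOf _

theorem phiFun_iterate_injOn {a b : Fin n} (ha : a ∈ Plist h v) (hb : b ∈ Plist h v) (k : ℕ)
    (hab : (phiFun h v)^[k] a = (phiFun h v)^[k] b) : a = b := by
  induction k with
  | zero => exact hab
  | succ k ih =>
    rw [Function.iterate_succ_apply', Function.iterate_succ_apply'] at hab
    exact ih (phiFun_injOn h v (phiFun_iterate_maps h v ha k) (phiFun_iterate_maps h v hb k) hab)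

theorem isPer_of_mem_Plist {a : Fin n} (ha : a ∈ Plist h v) : IsPer (phiFun h v) a := by
  have hcard : Fintype.card (Fin n) < Fintype.card (Fin (n + 1)) := by simp
  obtain ⟨i, j, hij, hfe⟩ := Fintype.exists_ne_map_eq_of_card_lt
    (fun i : Fin (n + 1) => (phiFun h v)^[(i : ℕ)] a) hcard
  have key : ∀ i j : Fin (n+1), (i : ℕ) < (j : ℕ) →
      (phiFun h v)^[(i : ℕ)] a = (phiFun h v)^[(j : ℕ)] a → IsPer (phiFun h v) a := by
    intro i j hlt hfe2
    refine ⟨(j : ℕ) - i, by omega, ?_⟩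
    refine phiFun_iterate_injOn h v (phiFun_iterate_maps h v ha _) ha (i : ℕ) ?_
    rw [← Function.iterate_add_apply, Nat.add_sub_cancel' (le_of_lt hlt)]
    exact hfe2.symm
  rcases lt_or_gt_of_ne (fun hc => hij (Fin.ext hc) : (i:ℕ) ≠ (j:ℕ)) with hlt | hlt
  · exact key i j hlt hfe
  · exact key j i hlt hfe.symm

theorem phiFun_enter (hg : Grounded (n-1) h) (a : Fin n) :
    ∃ m, (phiFun h v)^[m] a ∈ Plist h v := by
  classical
  obtain ⟨c, hc⟩ := hg
  have hex : ∃ m, h^[m] a ∈ Plist h v := by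
    refine ⟨n-1, ?_⟩
    rw [hc a, ← hc v, ← depth_spec h v]
    rw [mem_Plist]
    exact ⟨depth h v, le_rfl, rfl⟩
  set m := Nat.find hex with hm
  refine ⟨m, ?_⟩
  have hiter : ∀ i ≤ m, (phiFun h v)^[i] a = h^[i] a := by
    intro i hi
    induction i with
    | zero => simp
    | succ i ih =>
      have hi' : i ≤ m := by omega
      have hnot : h^[i] a ∉ Plist h v := Nat.find_min hex (by omega)
      rw [Function.iterate_succ_apply', ih hi', Function.iterate_succ_apply',
        phiFun_not_mem h v hnot]
  rw [hiter m le_rfl]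
  exact Nat.find_spec hex

theorem mem_Plist_of_isPer (hg : Grounded (n-1) h) {a : Fin n}
    (ha : IsPer (phiFun h v) a) : a ∈ Plist h v := by
  obtain ⟨m, hm⟩ := phiFun_enter h v hg a
  obtain ⟨k, hk, hka⟩ := ha
  have hK : (phiFun h v)^[k * (m+1)] a = a := IsPer.mul hka (m+1)
  have hKm : m ≤ k * (m+1) := by nlinarith
  have : (phiFun h v)^[k * (m+1)] a ∈ Plist h v := by
    have : (phiFun h v)^[k * (m+1) - m] ((phiFun h v)^[m] a) ∈ Plist h v :=
      phiFun_iterate_maps h v hm _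
    rwa [← Function.iterate_add_apply, Nat.sub_add_cancel hKm] at this
  rwa [hK] at this

theorem perFinset_phiFun (hg : Grounded (n-1) h) :
    perFinset (phiFun h v) = (Plist h v).toFinset := by
  classical
  ext a
  simp only [perFinset, Finset.mem_filter, Finset.mem_univ, true_and, List.mem_toFinset]
  exact ⟨mem_Plist_of_isPer h v hg, isPer_of_mem_Plist h v⟩

theorem Mlist_phiFun (hg : Grounded (n-1) h) : Mlist (phiFun h v) = Slist h v := by
  rw [Mlist, perFinset_phiFun h v hg, Slist]

theorem Llist_phiFun (hg : Grounded (n-1) h) : Llist (phiFun h v) = Plist h v := by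
  rw [Llist, Mlist_phiFun h v hg]
  refine List.ext_getElem (by rw [List.length_map, length_Slist]) ?_
  intro j h1 h2
  rw [List.getElem_map]
  exact phiFun_getElem h v (by simpa using h1)

theorem root_fixed0 {m : ℕ} {h : Fin m → Fin m} {c : Fin m} (hc : ∀ a, h^[m-1] a = c) :
    h c = c := by
  conv_lhs => rw [← hc c]
  rw [← Function.iterate_succ_apply' h (m-1) c, Function.iterate_succ_apply, hc (h c)]

theorem hFun_phiFun (hg : Grounded (n-1) h) : hFun (phiFun h v) = h := by
  obtain ⟨c, hc⟩ := hg
  funext a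
  by_cases ha : a ∈ Plist h v
  · rw [hFun, if_pos (by rwa [Llist_phiFun h v ⟨c, hc⟩]), Llist_phiFun h v ⟨c, hc⟩]
    obtain ⟨i, hi, rfl⟩ := List.getElem_of_mem ha
    rw [length_Plist] at hi
    by_cases hilast : i + 1 < (Plist h v).length
    · rw [nextD_getElem (nodup_Plist h v) hilast, Plist_getElem h v hilast,
        Plist_getElem h v (by rw [length_Plist]; omega)]
      exact Function.iterate_succ_apply' h i v
    · -- i = depth, the root
      rw [length_Plist] at hilast
      have hieq : i = depth h v := by omega
      have hlast : (Plist h v)[i]'(by rw [length_Plist]; omega) =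
          (Plist h v).getLast (by
            intro hcon
            have := length_Plist h v
            rw [hcon] at this
            simp at this) := by
        rw [List.getLast_eq_getElem]
        congr 1
        rw [length_Plist]; omega
      rw [hlast, nextD_last (nodup_Plist h v), ← hlast]
      rw [Plist_getElem h v (by rw [length_Plist]; omega), hieq, depth_spec h v, hc v]
      exact (root_fixed0 hc).symm
  · rw [hFun, if_neg (by rwa [Llist_phiFun h v ⟨c, hc⟩]), phiFun_not_mem h v ha]

end Phi

section RoundTrip
variable {n : ℕ}

noncomputable def vPt (hn : 0 < n) (g : Fin n → Fin n) : Fin n := (Llist g).getD 0 ⟨0, hn⟩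

theorem length_Llist_pos (g : Fin n → Fin n) (hn : 0 < n) : 0 < (Llist g).length :=
  List.length_pos_iff.2 (llist_ne_nil g hn)

theorem vPt_eq (hn : 0 < n) (g : Fin n → Fin n) :
    vPt hn g = (Llist g)[0]'(length_Llist_pos g hn) :=
  List.getD_eq_getElem _ _ _

theorem hFun_iterate_card (g : Fin n → Fin n) (hn : 0 < n) (a : Fin n) :
    (hFun g)^[n-1] a = (Llist g).getLast (llist_ne_nil g hn) := by
  have := reach_fix (hFun g) _ (hFun_last_fixed g hn) (hFun_reach g hn) a
  simpa using this

theorem hFun_step (g : Fin n → Fin n) (hn : 0 < n) :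
    ∀ i (hi : i < (Llist g).length), (hFun g)^[i] (vPt hn g) = (Llist g)[i] := by
  intro i
  induction i with
  | zero => intro hi; simpa using vPt_eq hn g
  | succ i ih =>
    intro hi
    have hi' : i < (Llist g).length := by omega
    rw [Function.iterate_succ_apply', ih hi', hFun_mem g (List.getElem_mem hi'),
      nextD_getElem (nodup_Llist g) hi]

theorem depth_hFun (g : Fin n → Fin n) (hn : 0 < n) :
    depth (hFun g) (vPt hn g) = (Llist g).length - 1 := by
  classical
  rw [depth, Nat.find_eq_iff]
  constructor
  · rw [hFun_step g hn _ (by have := length_Llist_pos g hn; omega), hFun_iterate_card g hn,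
      List.getLast_eq_getElem]
  · intro k hk
    rw [hFun_step g hn _ (by omega), hFun_iterate_card g hn, List.getLast_eq_getElem]
    intro hc
    have := ((nodup_Llist g).getElem_inj_iff).1 hc
    omega

theorem Plist_hFun (g : Fin n → Fin n) (hn : 0 < n) :
    Plist (hFun g) (vPt hn g) = Llist g := by
  refine List.ext_getElem ?_ ?_
  · rw [length_Plist, depth_hFun g hn]
    have := length_Llist_pos g hn; omega
  · intro i h1 h2
    rw [Plist_getElem, hFun_step g hn i h2]

theorem toFinset_Llist (g : Fin n → Fin n) : (Llist g).toFinset = perFinset g := by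
  classical
  ext a
  simp only [List.mem_toFinset, mem_Llist, perFinset, Finset.mem_filter, Finset.mem_univ, true_and]

theorem Slist_hFun (g : Fin n → Fin n) (hn : 0 < n) :
    Slist (hFun g) (vPt hn g) = Mlist g := by
  rw [Slist, Plist_hFun g hn, toFinset_Llist, Mlist]

theorem phiFun_hFun (g : Fin n → Fin n) (hn : 0 < n) :
    phiFun (hFun g) (vPt hn g) = g := by
  funext a
  by_cases ha : a ∈ Llist g
  · have haP : a ∈ Plist (hFun g) (vPt hn g) := by rwa [Plist_hFun g hn]
    rw [phiFun, if_pos haP, Plist_hFun g hn, Slist_hFun g hn]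
    have haM : a ∈ Mlist g := (mem_Mlist g).2 ((mem_Llist g).1 ha)
    have hj : (Mlist g).idxOf a < (Mlist g).length := List.idxOf_lt_length_iff.2 haM
    have hjL : (Mlist g).idxOf a < (Llist g).length := by rwa [length_Llist]
    rw [List.getD_eq_getElem _ _ hjL]
    calc (Llist g)[(Mlist g).idxOf a] = g ((Mlist g)[(Mlist g).idxOf a]'hj) := by
          simp only [Llist, List.getElem_map]
      _ = g a := by rw [List.getElem_idxOf hj]
  · have haP : a ∉ Plist (hFun g) (vPt hn g) := by rwa [Plist_hFun g hn]
    rw [phiFun_not_mem _ _ haP, hFun_not_mem g ha]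

theorem vPt_phiFun (h : Fin n → Fin n) (v : Fin n) (hn : 0 < n) (hg : Grounded (n-1) h) :
    vPt hn (phiFun h v) = v := by
  have h0 : 0 < (Llist (phiFun h v)).length := length_Llist_pos _ hn
  rw [vPt_eq hn, List.getElem_of_eq (Llist_phiFun h v hg)]
  rw [Plist_getElem]
  simp

theorem ncard_grounded_aux (hn : 0 < n) :
    {g : Fin n → Fin n | Grounded (n-1) g}.ncard * n = n ^ n := by
  classical
  set S : Set (Fin n → Fin n) := {g | Grounded (n-1) g} with hS
  set T : Set ((Fin n → Fin n) × Fin n) := S ×ˢ Set.univ with hT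
  have hbij : Set.BijOn (fun g => (hFun g, vPt hn g)) Set.univ T := by
    refine ⟨fun g _ => ?_, fun g1 _ g2 _ he => ?_, fun p hp => ?_⟩
    · exact ⟨hFun_grounded g hn, Set.mem_univ _⟩
    · have h1 : hFun g1 = hFun g2 := congrArg Prod.fst he
      have h2 : vPt hn g1 = vPt hn g2 := congrArg Prod.snd he
      rw [← phiFun_hFun g1 hn, ← phiFun_hFun g2 hn, h1, h2]
    · obtain ⟨hp1, -⟩ := hp
      refine ⟨phiFun p.1 p.2, Set.mem_univ _, ?_⟩
      show (hFun (phiFun p.1 p.2), vPt hn (phiFun p.1 p.2)) = p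
      rw [hFun_phiFun p.1 p.2 hp1, vPt_phiFun p.1 p.2 hn hp1]
  have hcard : (Set.univ : Set (Fin n → Fin n)).ncard = T.ncard := by
    rw [← hbij.image_eq, Set.ncard_image_of_injOn hbij.injOn]
  have hTcard : T.ncard = S.ncard * n := by
    rw [← Nat.card_coe_set_eq, hT]
    rw [Nat.card_congr (Equiv.Set.prod S Set.univ), Nat.card_prod]
    rw [Nat.card_coe_set_eq, Nat.card_coe_set_eq, Set.ncard_univ, Nat.card_eq_fintype_card,
      Fintype.card_fin]
  have huniv : (Set.univ : Set (Fin n → Fin n)).ncard = n ^ n := by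
    rw [Set.ncard_univ, Nat.card_eq_fintype_card, Fintype.card_fun, Fintype.card_fin]
  rw [hcard, hTcard] at huniv
  exact huniv

theorem ncard_grounded (hn : 0 < n) :
    {g : Fin n → Fin n | Grounded (n-1) g}.ncard = n ^ (n-1) := by
  have h1 := ncard_grounded_aux hn
  have h2 : n ^ (n-1) * n = n ^ n := by
    rw [← pow_succ]
    congr 1
    omega
  rw [← h2] at h1
  exact Nat.eq_of_mul_eq_mul_right hn h1

end RoundTrip

section ASide
variable {A : Type*} [Fintype A]

theorem fix_of_const {m : ℕ} {g : A → A} {c : A} (hc : ∀ a, g^[m] a = c) : g c = c := by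
  conv_lhs => rw [← hc c]
  rw [← Function.iterate_succ_apply' g m c, Function.iterate_succ_apply, hc (g c)]

open Classical in
/-- the parent map associated to a morphism. -/
noncomputable def gOf (f : A → List A) : A → A := fun β =>
  if h : ∃ γ, f β = f γ ++ [β] then Classical.choose h else β

open Classical in
/-- the depth of `β` for an (eventually constant) function `g`. -/
noncomputable def depA (m : ℕ) (g : A → A) (β : A) : ℕ :=
  Nat.find (⟨m, rfl⟩ : ∃ i, g^[i] β = g^[m] β)

theorem depA_def (m : ℕ) (g : A → A) (β : A) :
    g^[depA m g β] β = g^[m] β ∧ ∀ k, k < depA m g β → g^[k] β ≠ g^[m] β := by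
  classical
  unfold depA
  exact ⟨Nat.find_spec (p := fun i => g^[i] β = g^[m] β) ⟨m, rfl⟩,
    fun k hk => Nat.find_min (p := fun i => g^[i] β = g^[m] β) ⟨m, rfl⟩ hk⟩

theorem depA_eq (m : ℕ) (g : A → A) (β : A) (k : ℕ) (h1 : g^[k] β = g^[m] β)
    (h2 : ∀ i, i < k → g^[i] β ≠ g^[m] β) : depA m g β = k := by
  classical
  unfold depA
  rw [Nat.find_eq_iff]
  exact ⟨h1, h2⟩

/-- the morphism associated to a grounded function `g`. -/
noncomputable def fOf (m : ℕ) (g : A → A) : A → List A := fun β =>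
  (List.range (depA m g β + 1)).map (fun i => g^[depA m g β - i] β)

section BLSPFacts
variable {f : A → List A} {α : A} (hα : f α = [α]) (hstep : ∀ β, β ≠ α → ∃ γ, f β = f γ ++ [β])
include hα hstep

theorem lastF (β : A) : (f β).getLast? = some β := by
  by_cases hβ : β = α
  · subst hβ; rw [hα]; rfl
  · obtain ⟨γ, hγ⟩ := hstep β hβ
    rw [hγ, List.getLast?_concat]

theorem fne (β : A) : f β ≠ [] := by
  intro hc
  have := lastF hα hstep β
  rw [hc] at this
  simp at this

theorem f_inj {β₁ β₂ : A} (h : f β₁ = f β₂) : β₁ = β₂ := by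
  have h1 := lastF hα hstep β₁
  have h2 := lastF hα hstep β₂
  rw [h, h2] at h1
  exact (Option.some_injective _ h1).symm

theorem gOf_alpha : gOf f α = α := by
  rw [gOf, dif_neg]
  rintro ⟨γ, hγ⟩
  rw [hα] at hγ
  have : (f γ).length + 1 = 1 := by
    have := congrArg List.length hγ
    simpa using this.symm
  have h0 : f γ = [] := List.length_eq_zero_iff.1 (by omega)
  exact fne hα hstep γ h0

theorem gOf_spec {β : A} (hβ : β ≠ α) : f β = f (gOf f β) ++ [β] := by
  rw [gOf, dif_pos (hstep β hβ)]
  exact Classical.choose_spec (hstep β hβ)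

theorem len_pos (β : A) : 0 < (f β).length := List.length_pos_iff.2 (fne hα hstep β)

theorem len_one {β : A} (h : (f β).length = 1) : β = α := by
  by_contra hβ
  have := gOf_spec hα hstep hβ
  have hlen := congrArg List.length this
  simp at hlen
  have := len_pos hα hstep (gOf f β)
  omega

theorem iter_len {β : A} : ∀ i, i ≤ (f β).length - 1 →
    (f ((gOf f)^[i] β)).length = (f β).length - i := by
  intro i
  induction i with
  | zero => simp
  | succ i ih =>
    intro hi
    have hlenβ := len_pos hα hstep β
    have hi' : i ≤ (f β).length - 1 := by omega
    have hlen := ih hi'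
    have hne : (gOf f)^[i] β ≠ α := by
      intro hc
      rw [hc, hα] at hlen
      simp at hlen
      omega
    have hspec := gOf_spec hα hstep hne
    have hlen2 := congrArg List.length hspec
    simp at hlen2
    rw [Function.iterate_succ_apply']
    omega

theorem reach_alpha (β : A) : (gOf f)^[(f β).length - 1] β = α := by
  apply len_one hα hstep
  rw [iter_len hα hstep _ le_rfl]
  have := len_pos hα hstep β
  omega

theorem len_le (β : A) : (f β).length ≤ Fintype.card A := by
  have hinj : Function.Injective (fun i : Fin ((f β).length) => (gOf f)^[(i : ℕ)] β) := by
    intro i j hij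
    have hlenβ := len_pos hα hstep β
    have h1 := iter_len hα hstep (β := β) i (by omega)
    have h2 := iter_len hα hstep (β := β) j (by omega)
    simp only at hij
    rw [hij] at h1
    rw [h2] at h1
    have hi := i.2
    have hj := j.2
    exact Fin.ext (by omega)
  have := Fintype.card_le_of_injective _ hinj
  simpa using this

theorem gOf_grounded (β : A) : (gOf f)^[Fintype.card A - 1] β = α := by
  have hle := len_le hα hstep β
  have hpos := len_pos hα hstep β
  have hcard : 0 < Fintype.card A := Fintype.card_pos_iff.2 ⟨α⟩
  have : Fintype.card A - 1 = (Fintype.card A - 1 - ((f β).length - 1)) + ((f β).length - 1) := by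
    omega
  rw [this, Function.iterate_add_apply, reach_alpha hα hstep β]
  exact Function.iterate_fixed (by
    have := gOf_alpha hα hstep
    exact this) _

end BLSPFacts

section GroundedFacts
variable {m : ℕ} {g : A → A} {c : A} (hc : ∀ a, g^[m] a = c)
include hc

theorem depA_iter {β : A} : g^[depA m g β] β = c := by
  rw [(depA_def m g β).1, hc]

theorem depA_min {β : A} {i : ℕ} (hi : i < depA m g β) : g^[i] β ≠ c := by
  have := (depA_def m g β).2 i hi
  rwa [hc] at this

theorem depA_alpha : depA m g c = 0 := by
  refine depA_eq m g c 0 (by simp [hc]) (by omega)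

theorem depA_pos' {β : A} (hβ : β ≠ c) : 0 < depA m g β := by
  rcases Nat.eq_zero_or_pos (depA m g β) with h | h
  · exfalso
    have := depA_iter (β := β) hc
    rw [h] at this
    exact hβ this
  · exact h

theorem depA_g {β : A} (hβ : β ≠ c) : depA m g (g β) = depA m g β - 1 := by
  have hd := depA_pos' hc hβ
  refine depA_eq m g (g β) _ ?_ ?_
  · rw [hc]
    have h2 : g^[depA m g β - 1] (g β) = g^[depA m g β - 1 + 1] β := by
      rw [Function.iterate_succ_apply]
    rw [h2, Nat.sub_add_cancel hd]
    exact depA_iter hc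
  · intro k hk
    rw [hc]
    have h2 : g^[k] (g β) = g^[k + 1] β := by rw [Function.iterate_succ_apply]
    rw [h2]
    exact depA_min hc (by omega)

theorem fOf_alpha : fOf m g c = [c] := by
  rw [fOf, depA_alpha hc]
  simp [Function.iterate_zero_apply]

theorem fOf_step {β : A} (hβ : β ≠ c) : fOf m g β = fOf m g (g β) ++ [β] := by
  have hd := depA_pos' hc hβ
  set d := depA m g β with hdd
  have hdg : depA m g (g β) = d - 1 := depA_g hc hβ
  rw [fOf, fOf, hdg, ← hdd]
  have h1 : List.range (d + 1) = List.range d ++ [d] := by rw [List.range_succ]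
  rw [h1, List.map_append]
  congr 1
  · refine List.ext_getElem (by simp; omega) ?_
    intro i hi1 hi2
    simp only [List.getElem_map, List.getElem_range]
    simp only [List.length_map, List.length_range] at hi1
    have : d - i = (d - 1 - i) + 1 := by omega
    rw [this, Function.iterate_succ_apply]
  · simp

theorem fOf_isBLSP : fOf m g c = [c] ∧ ∀ β, β ≠ c → ∃ γ, fOf m g β = fOf m g γ ++ [β] :=
  ⟨fOf_alpha hc, fun β hβ => ⟨g β, fOf_step hc hβ⟩⟩

end GroundedFacts
end ASide

section Final
variable {A : Type*} [Fintype A]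

theorem gOf_fOf {m : ℕ} {g : A → A} {c : A} (hc : ∀ a, g^[m] a = c) :
    gOf (fOf m g) = g := by
  have hα : fOf m g c = [c] := fOf_alpha hc
  have hstep : ∀ β, β ≠ c → ∃ γ, fOf m g β = fOf m g γ ++ [β] :=
    fun β hβ => ⟨g β, fOf_step hc hβ⟩
  funext β
  by_cases hβ : β = c
  · subst hβ
    rw [gOf_alpha hα hstep, fix_of_const hc]
  · have h1 := gOf_spec hα hstep hβ
    have h2 := fOf_step hc hβ
    rw [h1] at h2
    have h3 : fOf m g (gOf (fOf m g) β) = fOf m g (g β) :=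
      List.append_cancel_right h2
    exact f_inj hα hstep h3

variable {f : A → List A} {α : A} (hα : f α = [α]) (hstep : ∀ β, β ≠ α → ∃ γ, f β = f γ ++ [β])
include hα hstep

theorem fOf_gOf : fOf (Fintype.card A - 1) (gOf f) = f := by
  set m := Fintype.card A - 1 with hm
  have hc : ∀ a, (gOf f)^[m] a = α := fun a => gOf_grounded hα hstep a
  have key : ∀ L β, (f β).length = L → fOf m (gOf f) β = f β := by
    intro L
    induction L using Nat.strong_induction_on with
    | _ L ih =>
      intro β hLβ
      by_cases hβ : β = α
      · subst hβ
        rw [hα, fOf_alpha hc]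
      · have hspec := gOf_spec hα hstep hβ
        have hlen := congrArg List.length hspec
        simp only [List.length_append, List.length_cons, List.length_nil] at hlen
        have hlt : (f (gOf f β)).length < L := by
          have := len_pos hα hstep (gOf f β)
          omega
        rw [fOf_step hc hβ, ih _ hlt (gOf f β) rfl]
        exact hspec.symm
  funext β
  exact key _ β rfl

end Final

section Assemble
variable {A : Type*} [Fintype A]

theorem ncard_bLSP_eq_grounded :
    {f : A → List A | ∃ α, f α = [α] ∧ ∀ β, β ≠ α → ∃ γ, f β = f γ ++ [β]}.ncard =
    {g : A → A | Grounded (Fintype.card A - 1) g}.ncard := by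
  classical
  set m := Fintype.card A - 1 with hm
  set SB : Set (A → List A) := {f | ∃ α, f α = [α] ∧ ∀ β, β ≠ α → ∃ γ, f β = f γ ++ [β]}
  set SG : Set (A → A) := {g | Grounded m g}
  have hbij : Set.BijOn gOf SB SG := by
    refine ⟨fun f hf => ?_, fun f1 hf1 f2 hf2 he => ?_, fun g hg => ?_⟩
    · obtain ⟨α, hα, hstep⟩ := hf
      exact ⟨α, fun a => gOf_grounded hα hstep a⟩
    · obtain ⟨α1, hα1, hstep1⟩ := hf1
      obtain ⟨α2, hα2, hstep2⟩ := hf2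
      rw [← fOf_gOf hα1 hstep1, ← fOf_gOf hα2 hstep2, he]
    · obtain ⟨c, hc⟩ := hg
      refine ⟨fOf m g, ⟨c, fOf_alpha hc, fun β hβ => ⟨g β, fOf_step hc hβ⟩⟩, gOf_fOf hc⟩
  rw [← hbij.image_eq, Set.ncard_image_of_injOn hbij.injOn]

theorem conj_iterate {n : ℕ} (e : A ≃ Fin n) (g : A → A) (k : ℕ) (a : Fin n) :
    (fun x => e (g (e.symm x)))^[k] a = e (g^[k] (e.symm a)) := by
  induction k generalizing a with
  | zero => simp
  | succ k ih =>
    rw [Function.iterate_succ_apply, ih]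
    simp only [Equiv.symm_apply_apply]
    rw [← Function.iterate_succ_apply]

theorem conj_iterate' {n : ℕ} (e : A ≃ Fin n) (h : Fin n → Fin n) (k : ℕ) (a : A) :
    (fun x => e.symm (h (e x)))^[k] a = e.symm (h^[k] (e a)) := by
  induction k generalizing a with
  | zero => simp
  | succ k ih =>
    rw [Function.iterate_succ_apply, ih]
    simp only [Equiv.apply_symm_apply]
    rw [← Function.iterate_succ_apply]

theorem ncard_grounded_A {n : ℕ} (hn : 1 ≤ n) (hA : Fintype.card A = n) :
    {g : A → A | Grounded (n - 1) g}.ncard = n ^ (n - 1) := by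
  classical
  obtain ⟨e⟩ : Nonempty (A ≃ Fin n) := ⟨Fintype.equivFinOfCardEq hA⟩
  set SGA : Set (A → A) := {g | Grounded (n - 1) g}
  set SGF : Set (Fin n → Fin n) := {g | Grounded (n - 1) g}
  have hbij : Set.BijOn (fun (g : A → A) => (fun x => e (g (e.symm x)))) SGA SGF := by
    refine ⟨fun g hg => ?_, fun g1 _ g2 _ he => ?_, fun h hh => ?_⟩
    · obtain ⟨c, hc⟩ := hg
      exact ⟨e c, fun a => by rw [conj_iterate, hc]⟩
    · funext a
      have := congrFun he (e a)
      simp only [Equiv.symm_apply_apply] at this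
      exact e.injective this
    · obtain ⟨c, hc⟩ := hh
      refine ⟨fun x => e.symm (h (e x)), ⟨e.symm c, fun a => by rw [conj_iterate', hc]⟩, ?_⟩
      funext x
      simp
  have h1 : SGA.ncard = SGF.ncard := by
    rw [← hbij.image_eq, Set.ncard_image_of_injOn hbij.injOn]
  rw [h1]
  exact ncard_grounded (by omega)

end Assemble

end CardBLSP

theorem card_bLSP {A : Type*} [Fintype A] (n : ℕ) (hn : 1 ≤ n)
    (hA : Fintype.card A = n) :
    {f : A → List A | IsBLSP f}.ncard = n ^ (n - 1) := by
  classical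
  have h1 : {f : A → List A | IsBLSP f} =
      {f : A → List A | ∃ α, f α = [α] ∧ ∀ β, β ≠ α → ∃ γ, f β = f γ ++ [β]} := rfl
  rw [h1, CardBLSP.ncard_bLSP_eq_grounded, hA]
  exact CardBLSP.ncard_grounded_A hn hA
end

section
/- For every infinite LSP word w over a finite alphabet A, there exist a bLSP morphism f of B*, where B = alph(w) is the set of letters occurring in w, and an infinite word w' over B such that w = f(w'). -/
attribute [local instance] Classical.propDecidable

namespace LSPAux

noncomputable section

variable {A : Type*} (w : ℕ → A)

/-- First occurrence of a letter. -/
def fo (b : Set.range w) : ℕ := Nat.find b.2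

lemma fo_spec (b : Set.range w) : w (fo w b) = b.val := Nat.find_spec b.2

lemma fo_min {b : Set.range w} {n : ℕ} (h : w n = b.val) : fo w b ≤ n :=
  Nat.find_min' _ h

/-- The first letter. -/
def alpha : Set.range w := ⟨w 0, 0, rfl⟩

lemma eq_alpha_of_val {b : Set.range w} (h : b.val = w 0) : b = alpha w := Subtype.ext h

/-- The (unique) predecessor of a letter. -/
def pred (b : Set.range w) : Set.range w := ⟨w (fo w b - 1), fo w b - 1, rfl⟩

lemma fo_pos {b : Set.range w} (hb : b ≠ alpha w) : 1 ≤ fo w b := by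
  rcases Nat.eq_zero_or_pos (fo w b) with h | h
  · exact absurd (eq_alpha_of_val w (by rw [← fo_spec w b, h])) hb
  · exact h

lemma fo_pred_lt {b : Set.range w} (hb : b ≠ alpha w) : fo w (pred w b) < fo w b :=
  lt_of_le_of_lt (fo_min w rfl) (Nat.sub_lt (fo_pos w hb) one_pos)

/-- The bLSP morphism. -/
def f (b : Set.range w) : List (Set.range w) :=
  if h : b = alpha w then [b] else f (pred w b) ++ [b]
termination_by fo w b
decreasing_by exact fo_pred_lt w h

lemma f_alpha : f w (alpha w) = [alpha w] := by rw [f]; simp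

lemma f_ne {b : Set.range w} (hb : b ≠ alpha w) : f w b = f w (pred w b) ++ [b] := by
  rw [f]; simp [hb]

/-- Uniqueness of the predecessor, from the LSP property. -/
lemma pred_unique (hw : LSPInf w) {b : Set.range w} (hb : b ≠ alpha w) {n : ℕ}
    (hn : 1 ≤ n) (h : w n = b.val) : w (n - 1) = (pred w b).val := by
  by_contra hne
  have hm1 : 1 ≤ fo w b := fo_pos w hb
  have f1 : FactorI w (w (n - 1) :: [b.val]) := by
    refine ⟨n - 1, fun i hi => ?_⟩
    simp only [List.length_cons, List.length_nil] at hi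
    interval_cases i
    · simp
    · show b.val = w (n - 1 + 1)
      rw [Nat.sub_add_cancel hn]; exact h.symm
  have f2 : FactorI w (w (fo w b - 1) :: [b.val]) := by
    refine ⟨fo w b - 1, fun i hi => ?_⟩
    simp only [List.length_cons, List.length_nil] at hi
    interval_cases i
    · simp
    · show b.val = w (fo w b - 1 + 1)
      rw [Nat.sub_add_cancel hm1]; exact (fo_spec w b).symm
  have key := hw [b.val] (w (n - 1)) (w (fo w b - 1)) hne f1 f2
  have := key 0 (by simp)
  exact hb (eq_alpha_of_val w (by simpa using this))

/-- The first letter occurs infinitely often. -/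
lemma exists_alpha [Finite A] (hw : LSPInf w) (N : ℕ) : ∃ m, N ≤ m ∧ w m = w 0 := by
  by_contra hcon
  push_neg at hcon
  set g : ℕ → Set.range w := fun i => ⟨w (N + i), N + i, rfl⟩ with hg
  have mono : StrictMono (fun i => fo w (g i)) := by
    apply strictMono_nat_of_lt_succ
    intro i
    have hb : g (i + 1) ≠ alpha w := fun h =>
      hcon (N + (i + 1)) (by omega) (congrArg Subtype.val h)
    have hp := pred_unique w hw hb (n := N + (i + 1)) (by omega) rfl
    have heq : g i = pred w (g (i + 1)) := Subtype.ext (by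
      show w (N + i) = (pred w (g (i+1))).val
      have he : N + i = N + (i + 1) - 1 := by omega
      rw [he, hp])
    calc fo w (g i) = fo w (pred w (g (i + 1))) := by rw [heq]
      _ < fo w (g (i + 1)) := fo_pred_lt w hb
  have inj : Function.Injective g := fun a b hab => mono.injective (by simp [hab])
  obtain ⟨a, b, hab, he⟩ := Finite.exists_ne_map_eq_of_infinite g
  exact hab (inj he)

variable [Finite A] (hw : LSPInf w)

/-- Positions of occurrences of the first letter. -/
def pos : ℕ → ℕ
  | 0 => 0
  | k + 1 => Nat.find (exists_alpha w hw (pos k + 1))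

lemma pos_spec : ∀ k, w (pos w hw k) = w 0
  | 0 => rfl
  | k + 1 => (Nat.find_spec (exists_alpha w hw (pos w hw k + 1))).2

lemma pos_lt (k : ℕ) : pos w hw k < pos w hw (k + 1) :=
  (Nat.find_spec (exists_alpha w hw (pos w hw k + 1))).1

lemma pos_no_alpha {k j : ℕ} (h1 : pos w hw k < j) (h2 : j < pos w hw (k + 1)) :
    w j ≠ w 0 := fun h =>
  Nat.find_min (exists_alpha w hw (pos w hw k + 1)) h2 ⟨h1, h⟩

include hw in
/-- Key lemma: the image of the last letter of a block is the block. -/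
lemma block : ∀ d p, w p = w 0 → (∀ j, p < j → j ≤ p + d → w j ≠ w 0) →
    (f w ⟨w (p + d), p + d, rfl⟩).map Subtype.val
      = (List.range (d + 1)).map (fun i => w (p + i)) := by
  intro d
  induction d with
  | zero =>
    intro p hp _
    have hb : (⟨w (p + 0), p + 0, rfl⟩ : Set.range w) = alpha w :=
      Subtype.ext (by simpa [alpha] using hp)
    rw [hb, f_alpha]
    simp [alpha, List.range_succ, hp]
  | succ d ih =>
    intro p hp hno
    have hb : (⟨w (p + (d + 1)), p + (d + 1), rfl⟩ : Set.range w) ≠ alpha w := fun h =>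
      hno (p + (d + 1)) (by omega) (by omega) (congrArg Subtype.val h)
    have hpredeq : pred w ⟨w (p + (d + 1)), p + (d + 1), rfl⟩ = ⟨w (p + d), p + d, rfl⟩ := by
      have hp1 := pred_unique w hw hb (n := p + (d + 1)) (by omega) rfl
      refine Subtype.ext ?_
      show _ = w (p + d)
      have he : p + d = p + (d + 1) - 1 := by omega
      rw [he, hp1]
    rw [f_ne w hb, List.map_append, hpredeq, ih p hp (fun j h1 h2 => hno j h1 (by omega))]
    simp [List.range_succ]

/-- The desubstituted word. -/
def w' (k : ℕ) : Set.range w := ⟨w (pos w hw (k + 1) - 1), pos w hw (k + 1) - 1, rfl⟩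

lemma flatMap_eq (n : ℕ) :
    ((List.range n).map (w' w hw)).flatMap (fun b => (f w b).map Subtype.val)
      = (List.range (pos w hw n)).map w := by
  induction n with
  | zero => simp [pos]
  | succ n ih =>
    have hlt := pos_lt w hw n
    set d : ℕ := pos w hw (n + 1) - 1 - pos w hw n with hd
    have hpd : pos w hw n + d = pos w hw (n + 1) - 1 := by omega
    have hwn : w' w hw n = ⟨w (pos w hw n + d), pos w hw n + d, rfl⟩ :=
      Subtype.ext (by show w _ = w _; rw [hpd])
    have hblock := block w hw d (pos w hw n) (pos_spec w hw n)
      (fun j h1 h2 => pos_no_alpha w hw h1 (by omega))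
    rw [List.range_succ, List.map_append, List.flatMap_append, ih]
    simp only [List.map_cons, List.map_nil, List.flatMap_cons, List.flatMap_nil,
      List.append_nil]
    rw [hwn, hblock]
    have hsum : pos w hw (n + 1) = pos w hw n + (d + 1) := by omega
    rw [hsum]
    conv_rhs => rw [List.range_add, List.map_append, List.map_map]
    rfl

end

end LSPAux

theorem lsp_desubstitution {A : Type*} [Fintype A] (w : ℕ → A) (hw : LSPInf w) :
    ∃ (f : Set.range w → List (Set.range w)) (w' : ℕ → Set.range w),
      IsBLSP f ∧ IsImage (fun b => (f b).map Subtype.val) w' w := by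
  refine ⟨LSPAux.f w, LSPAux.w' w hw, ⟨LSPAux.alpha w, LSPAux.f_alpha w,
      fun β hβ => ⟨LSPAux.pred w β, LSPAux.f_ne w hβ⟩⟩, ?_⟩
  intro n
  rw [LSPAux.flatMap_eq w hw n]
  intro i hi
  simp at hi ⊢
end

section
/- Let w be an infinite LSP word over a finite alphabet A, let f and g be bLSP morphisms of A*, and let w', w'' be infinite words over A such that w = f(w') and w = g(w''). Then w' = w'' and f(β) = g(β) for every letter β occurring in w'. -/
private lemma blsp_shape {A : Type*} {f : A → List A} (hf : IsBLSP f) :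
    ∃ α, ∀ β, ∃ t, f β = α :: t ∧ α ∉ t ∧ (f β).getLast? = some β := by
  obtain ⟨α, hα, h⟩ := hf
  refine ⟨α, ?_⟩
  have hne : ∀ β, f β ≠ [] := by
    intro β
    by_cases hb : β = α
    · subst hb; simp [hα]
    · obtain ⟨γ, hγ⟩ := h β hb; simp [hγ]
  have key : ∀ n β, (f β).length ≤ n →
      ∃ t, f β = α :: t ∧ α ∉ t ∧ (f β).getLast? = some β := by
    intro n
    induction n with
    | zero => intro β hβ; exact absurd (List.length_eq_zero_iff.mp (Nat.le_zero.mp hβ)) (hne β)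
    | succ n ih =>
      intro β hβ
      by_cases hb : β = α
      · subst hb; exact ⟨[], by simp [hα]⟩
      · obtain ⟨γ, hγ⟩ := h β hb
        have hlen : (f γ).length ≤ n := by
          have := congrArg List.length hγ
          simp at this; omega
        obtain ⟨t, ht1, ht2, _⟩ := ih γ hlen
        refine ⟨t ++ [β], ?_, ?_, ?_⟩
        · rw [hγ, ht1]; simp
        · simp only [List.mem_append, List.mem_singleton]
          rintro (hx | hx)
          · exact ht2 hx
          · exact hb hx.symm
        · rw [hγ]; simp
  intro β; exact key (f β).length β le_rfl

private def BPart {A : Type*} (f : A → List A) (w' : ℕ → A) (n : ℕ) : List A :=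
  ((List.range n).map w').flatMap f

private lemma Part_succ {A : Type*} (f : A → List A) (w' : ℕ → A) (n : ℕ) :
    BPart f w' (n+1) = BPart f w' n ++ f (w' n) := by
  simp [BPart, List.range_succ]

private lemma part_block {A : Type*} {f : A → List A} {w' w : ℕ → A}
    (hfw : IsImage f w' w) (n j : ℕ) (hj : j < (f (w' n)).length) :
    (f (w' n))[j] = w ((BPart f w' n).length + j) := by
  have hlen : (BPart f w' n).length + j < (BPart f w' (n+1)).length := by
    rw [Part_succ]; simp; omega
  have h := hfw (n+1) ((BPart f w' n).length + j) hlen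
  have h2 : (BPart f w' (n+1))[(BPart f w' n).length + j]'hlen
      = (f (w' n))[j] := by
    simp only [Part_succ]
    rw [List.getElem_append_right (by omega)]
    congr 1; omega
  rw [← h2]; exact h

private lemma part_head {A : Type*} {f : A → List A} {w' w : ℕ → A} {α : A}
    (hfw : IsImage f w' w)
    (hfs : ∀ β, ∃ t, f β = α :: t ∧ α ∉ t ∧ (f β).getLast? = some β) (n : ℕ) :
    w ((BPart f w' n).length) = α := by
  obtain ⟨t, ht1, -, -⟩ := hfs (w' n)
  have h0 : 0 < (f (w' n)).length := by simp [ht1]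
  have := part_block hfw n 0 h0
  simp only [ht1, List.getElem_cons_zero, Nat.add_zero] at this
  exact this.symm

private lemma part_inner_ne {A : Type*} {f : A → List A} {w' w : ℕ → A} {α : A}
    (hfw : IsImage f w' w)
    (hfs : ∀ β, ∃ t, f β = α :: t ∧ α ∉ t ∧ (f β).getLast? = some β)
    (n j : ℕ) (hj1 : 1 ≤ j) (hj : j < (f (w' n)).length) :
    w ((BPart f w' n).length + j) ≠ α := by
  obtain ⟨t, ht1, ht2, -⟩ := hfs (w' n)
  obtain ⟨k, rfl⟩ : ∃ k, j = k + 1 := ⟨j - 1, by omega⟩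
  have := part_block hfw n (k+1) hj
  rw [← this]
  have hk : k < t.length := by
    have := congrArg List.length ht1; simp at this; omega
  have h2 : (f (w' n))[k+1]'hj = t[k]'hk := by
    simp only [ht1, List.getElem_cons_succ]
  rw [h2]
  intro he
  exact ht2 (he ▸ List.getElem_mem hk)


theorem lsp_desubstitution_unique {A : Type*} [Fintype A] (w w' w'' : ℕ → A)
    (hw : LSPInf w) (f g : A → List A) (hf : IsBLSP f) (hg : IsBLSP g)
    (hfw : IsImage f w' w) (hgw : IsImage g w'' w) :
    w' = w'' ∧ ∀ β : A, (∃ i, w' i = β) → f β = g β := by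
  obtain ⟨α, hfs⟩ := blsp_shape hf
  obtain ⟨α', hgs⟩ := blsp_shape hg
  have hP0 : (BPart f w' 0).length = 0 := by simp [BPart]
  have hQ0 : (BPart g w'' 0).length = 0 := by simp [BPart]
  have hαα' : α' = α := by
    have h1 := part_head hfw hfs 0
    have h2 := part_head hgw hgs 0
    rw [hP0] at h1; rw [hQ0] at h2; rw [← h1, ← h2]
  subst hαα'
  have hlen : ∀ n, (BPart f w' n).length = (BPart g w'' n).length := by
    intro n
    induction n with
    | zero => rw [hP0, hQ0]
    | succ n ih =>
      rw [Part_succ, Part_succ]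
      simp only [List.length_append]
      have key : (f (w' n)).length = (g (w'' n)).length := by
        by_contra hne
        obtain ⟨t, ht1, -, -⟩ := hfs (w' n)
        obtain ⟨s, hs1, -, -⟩ := hgs (w'' n)
        have hupos : 1 ≤ (f (w' n)).length := by simp [ht1]
        have hvpos : 1 ≤ (g (w'' n)).length := by simp [hs1]
        rcases Nat.lt_or_ge (f (w' n)).length (g (w'' n)).length with hlt | hge
        · have hα1 : w ((BPart f w' n).length + (f (w' n)).length) = α' := by
            have := part_head hfw hfs (n+1)
            rwa [Part_succ, List.length_append] at this
          have hne2 := part_inner_ne hgw hgs n (f (w' n)).length hupos hlt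
          rw [← ih] at hne2
          exact hne2 hα1
        · have hlt : (g (w'' n)).length < (f (w' n)).length := by omega
          have hα1 : w ((BPart g w'' n).length + (g (w'' n)).length) = α' := by
            have := part_head hgw hgs (n+1)
            rwa [Part_succ, List.length_append] at this
          have hne2 := part_inner_ne hfw hfs n (g (w'' n)).length hvpos hlt
          rw [ih] at hne2
          exact hne2 hα1
      omega
  have hblock : ∀ n, f (w' n) = g (w'' n) := by
    intro n
    have hl : (f (w' n)).length = (g (w'' n)).length := by
      have h1 := hlen n; have h2 := hlen (n+1)
      rw [Part_succ, Part_succ] at h2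
      simp only [List.length_append] at h2; omega
    apply List.ext_getElem hl
    intro j hj1 hj2
    rw [part_block hfw n j hj1, part_block hgw n j hj2, hlen n]
  have hww : w' = w'' := by
    funext n
    obtain ⟨-, -, -, hlast1⟩ := hfs (w' n)
    obtain ⟨-, -, -, hlast2⟩ := hgs (w'' n)
    rw [hblock n] at hlast1
    rw [hlast1] at hlast2
    exact Option.some.inj hlast2
  refine ⟨hww, ?_⟩
  rintro β ⟨i, rfl⟩
  rw [hblock i, ← hww]
end

section
/- For every bLSP morphism f of A* and every infinite word w over A: if f(w) is LSP, then w is LSP. -/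
namespace LSPAux

variable {A : Type*}

/-- The prefix of the image word coming from the first `n` letters. -/
def Pim (f : A → List A) (w : ℕ → A) (n : ℕ) : List A :=
  ((List.range n).map w).flatMap f

lemma Pim_succ (f : A → List A) (w : ℕ → A) (n : ℕ) :
    Pim f w (n + 1) = Pim f w n ++ f (w n) := by
  simp [Pim, List.range_succ]

lemma Pim_shift (f : A → List A) (w : ℕ → A) (n : ℕ) :
    Pim f w (n + 1) = f (w 0) ++ Pim f (fun i => w (i + 1)) n := by
  simp only [Pim, List.range_succ_eq_map, List.map_cons, List.flatMap_cons, List.map_map]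
  rfl

lemma pref_head {v : ℕ → A} {l₁ l₂ : List A} (h : PrefI (l₁ ++ l₂) v) :
    ∀ i (hi : i < l₁.length), l₁[i] = v i := by
  intro i hi
  have hlt : i < (l₁ ++ l₂).length := by simp; omega
  have := h i hlt
  rwa [List.getElem_append_left hi] at this

lemma pref_tail {v : ℕ → A} {l₁ l₂ : List A} (h : PrefI (l₁ ++ l₂) v) :
    ∀ i (hi : i < l₂.length), l₂[i] = v (l₁.length + i) := by
  intro i hi
  have hlt : l₁.length + i < (l₁ ++ l₂).length := by simp; omega
  have := h _ hlt
  rw [List.getElem_append_right (by omega)] at this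
  convert this using 2
  omega

lemma factorI_of_pref {v : ℕ → A} {l₁ l₂ l₃ : List A}
    (h : PrefI (l₁ ++ (l₂ ++ l₃)) v) : FactorI v l₂ := by
  refine ⟨l₁.length, fun i hi => ?_⟩
  have := pref_tail h i (by simp; omega)
  rwa [List.getElem_append_left hi] at this

section Struct

variable {f : A → List A} {α : A} (hα : f α = [α])
  (hstep : ∀ β, β ≠ α → ∃ γ, f β = f γ ++ [β])

include hα hstep in
lemma struct : ∀ β, (∃ t, f β = α :: t ∧ α ∉ t) ∧ ∃ s, f β = s ++ [β] := by
  have key : ∀ n β, (f β).length ≤ n →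
      (∃ t, f β = α :: t ∧ α ∉ t) ∧ ∃ s, f β = s ++ [β] := by
    intro n
    induction n with
    | zero =>
      intro β hβ
      by_cases h : β = α
      · subst h; rw [hα] at hβ; simp at hβ
      · obtain ⟨γ, hγ⟩ := hstep β h
        rw [hγ] at hβ; simp at hβ
    | succ n ih =>
      intro β hβ
      by_cases h : β = α
      · subst h
        exact ⟨⟨[], by simp [hα], by simp⟩, ⟨[], by simp [hα]⟩⟩
      · obtain ⟨γ, hγ⟩ := hstep β h
        have hlen : (f γ).length ≤ n := by
          rw [hγ] at hβ; simp at hβ; omega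
        obtain ⟨⟨t, ht, htα⟩, _⟩ := ih γ hlen
        refine ⟨⟨t ++ [β], by rw [hγ, ht]; simp, ?_⟩, ⟨f γ, hγ⟩⟩
        simp only [List.mem_append, List.mem_singleton]
        rintro (hc | hc)
        · exact htα hc
        · exact h hc.symm
  exact fun β => key (f β).length β le_rfl

include hα hstep in
lemma flat_cons (l : List A) : ∃ r, l.flatMap f ++ [α] = α :: r := by
  cases l with
  | nil => exact ⟨[], rfl⟩
  | cons e l' =>
    obtain ⟨⟨t, ht, _⟩, _⟩ := struct hα hstep e
    exact ⟨t ++ (l'.flatMap f ++ [α]), by simp [ht]⟩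

lemma Pim_agree (w : ℕ → A) :
    ∀ (u : List A) (k : ℕ), (∀ i (h : i < u.length), u[i] = w (k + i)) →
      Pim f w (k + u.length) = Pim f w k ++ u.flatMap f := by
  intro u
  induction u with
  | nil => intro k _; simp [Pim]
  | cons c u' ih =>
    intro k hu
    have hc : c = w k := by have := hu 0 (by simp); simpa using this
    have h' : ∀ i (h : i < u'.length), u'[i] = w (k + 1 + i) := by
      intro i hi
      have := hu (i + 1) (by simp; omega)
      simpa [show k + (i + 1) = k + 1 + i by omega] using this
    have : k + (c :: u').length = (k + 1) + u'.length := by simp; omega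
    rw [this, ih (k + 1) h', Pim_succ, ← hc]
    simp [List.append_assoc]

include hα hstep in
lemma transfer {w v : ℕ → A} (hv : IsImage f w v) {x : A} {u : List A}
    (h : FactorI w (x :: u)) : FactorI v (x :: (u.flatMap f ++ [α])) := by
  obtain ⟨k, hk⟩ := h
  have hx : w k = x := by have := hk 0 (by simp); simpa using this.symm
  have hu : ∀ i (hi : i < u.length), u[i] = w (k + 1 + i) := by
    intro i hi
    have := hk (i + 1) (by simp; omega)
    simpa [show k + (i + 1) = k + 1 + i by omega] using this
  obtain ⟨_, s, hs⟩ := struct hα hstep x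
  obtain ⟨⟨t', ht', _⟩, _⟩ := struct hα hstep (w (k + 1 + u.length))
  have hP : Pim f w (k + 1 + u.length + 1) =
      (Pim f w k ++ s) ++ ((x :: (u.flatMap f ++ [α])) ++ t') := by
    rw [Pim_succ, Pim_agree w u (k + 1) hu, Pim_succ, hx, hs, ht']
    simp [List.append_assoc]
  have hvP : PrefI (Pim f w (k + 1 + u.length + 1)) v := hv _
  rw [hP] at hvP
  exact factorI_of_pref hvP

include hα hstep in
lemma key : ∀ (u : List A) (w v : ℕ → A), IsImage f w v →
    PrefI (u.flatMap f ++ [α]) v → PrefI u w := by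
  intro u
  induction u with
  | nil => intro w v _ _ i hi; simp at hi
  | cons c u' ih =>
    intro w v hv h
    obtain ⟨⟨tc, htc, htcα⟩, sc, hsc⟩ := struct hα hstep c
    obtain ⟨⟨td, htd, htdα⟩, sd, hsd⟩ := struct hα hstep (w 0)
    obtain ⟨⟨t1, ht1, _⟩, _⟩ := struct hα hstep (w 1)
    obtain ⟨r, hr⟩ := flat_cons hα hstep u'
    have h' : PrefI (f c ++ (u'.flatMap f ++ [α])) v := by
      rw [← List.append_assoc]
      simpa using h
    have h'2 : PrefI ((α :: tc) ++ (α :: r)) v := by rw [← htc, ← hr]; exact h'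
    have hv2 : PrefI ((α :: td) ++ (α :: t1)) v := by
      have h2 := hv 2
      have e : Pim f w 2 = (α :: td) ++ (α :: t1) := by
        rw [show (2:ℕ) = 1 + 1 by rfl, Pim_succ, show (1:ℕ) = 0 + 1 by rfl, Pim_succ,
          htd, ht1]
        simp [Pim]
      rw [← e]; exact h2
    -- v letterwise for the two decompositions
    have htcv : ∀ j (hj : j < tc.length), tc[j] = v (j + 1) := by
      intro j hj
      have := pref_head h'2 (j + 1) (by simp; omega)
      simpa using this
    have htdv : ∀ j (hj : j < td.length), td[j] = v (j + 1) := by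
      intro j hj
      have := pref_head hv2 (j + 1) (by simp; omega)
      simpa using this
    have hvm : v (tc.length + 1) = α := by
      have := pref_tail h'2 0 (by simp)
      simpa using this.symm
    have hvd : v (td.length + 1) = α := by
      have := pref_tail hv2 0 (by simp)
      simpa using this.symm
    -- lengths are equal
    have hmd : tc.length = td.length := by
      by_contra hne
      rcases Nat.lt_or_ge tc.length td.length with hlt | hge
      · have := htdv tc.length hlt
        rw [hvm] at this
        exact htdα (this ▸ List.getElem_mem _)
      · have hlt : td.length < tc.length := by omega
        have := htcv td.length hlt
        rw [hvd] at this
        exact htcα (this ▸ List.getElem_mem _)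
    have hfc : f c = f (w 0) := by
      rw [htc, htd]
      congr 1
      apply List.ext_getElem hmd
      intro i h1 h2
      rw [htcv i h1, htdv i h2]
    have hcd : c = w 0 := by
      have e : sc ++ [c] = sd ++ [w 0] := by rw [← hsc, ← hsd]; exact hfc
      have := congrArg List.getLast? e
      simpa [List.getLast?_concat] using this
    -- shift
    have hlenfc : (f c).length = (f (w 0)).length := by rw [hfc]
    have hv' : IsImage f (fun i => w (i + 1)) (fun i => v ((f c).length + i)) := by
      intro n i hi
      have h2 : PrefI (f (w 0) ++ Pim f (fun i => w (i + 1)) n) v := by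
        have := hv (n + 1)
        rw [show (((List.range (n+1)).map w).flatMap f) = Pim f w (n+1) from rfl,
          Pim_shift] at this
        exact this
      have := pref_tail h2 i hi
      rw [← hlenfc] at this
      exact this
    have h'' : PrefI (u'.flatMap f ++ [α]) (fun i => v ((f c).length + i)) := by
      intro i hi
      exact pref_tail h' i hi
    have hpw' := ih (fun i => w (i + 1)) _ hv' h''
    intro i hi
    match i with
    | 0 => simpa using hcd
    | (j + 1) =>
      have hj : j < u'.length := by simpa using hi
      have := hpw' j hj
      simpa using this

end Struct

end LSPAux

theorem lsp_of_image_lsp {A : Type*} (f : A → List A) (hf : IsBLSP f)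
    (w v : ℕ → A) (hv : IsImage f w v) (hLSP : LSPInf v) : LSPInf w := by
  obtain ⟨α, hα, hstep⟩ := hf
  intro u a b hab ha hb
  have hfa := LSPAux.transfer hα hstep hv ha
  have hfb := LSPAux.transfer hα hstep hv hb
  have hpref := hLSP (u.flatMap f ++ [α]) a b hab hfa hfb
  exact LSPAux.key hα hstep u w v hv hpref
end

section
/- Let A = {a, b} be a two-letter alphabet (a ≠ b), and let τ_a and τ_b be the endomorphisms of A* defined by τ_a(a) = a, τ_a(b) = ab and τ_b(a) = ba, τ_b(b) = b. If w is an infinite LSP word over A and f ∈ {τ_a, τ_b}, then f(w) is LSP. -/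
/-- Decode a boundary-aligned factor of `f(w)` back to a factor of `w`,
for `f α = [α]`, `f β = [α, β]`. A trailing single letter is dropped. -/
def dec {A : Type*} [DecidableEq A] (α β : A) : List A → List A
  | [] => []
  | [_] => []
  | _ :: y :: rest => if y = β then β :: dec α β rest else α :: dec α β (y :: rest)

theorem key_lemma {A : Type*} [DecidableEq A] (α β : A) (hab : α ≠ β)
    (hA : ∀ x : A, x = α ∨ x = β) (f : A → List A)
    (hfa : f α = [α]) (hfb : f β = [α, β])
    (w : ℕ → A) (hw : LSPInf w) (v : ℕ → A) (hv : IsImage f w v) :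
    LSPInf v := by
  set P : ℕ → ℕ := fun n => (((List.range n).map w).flatMap f).length with hP
  have hPsucc : ∀ n, P (n+1) = P n + (f (w n)).length := by
    intro n; simp [hP, List.range_succ]
  have hP0 : P 0 = 0 := by simp [hP]
  have hblock : ∀ m i (h : i < (f (w m)).length), (f (w m))[i] = v (P m + i) := by
    intro m i h
    have h2 : P m + i < P (m+1) := by have := hPsucc m; omega
    have h3 := hv (m+1) (P m + i) h2
    have h5 : ((List.range (m+1)).map w).flatMap f
        = ((List.range m).map w).flatMap f ++ f (w m) := by simp [List.range_succ]
    simp only [h5] at h3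
    have h6 : (((List.range m).map w).flatMap f).length = P m := rfl
    rw [List.getElem_append_right (by omega)] at h3
    simp only [h6, Nat.add_sub_cancel_left] at h3
    exact h3
  have hfpos : ∀ x : A, 0 < (f x).length := by
    intro x; rcases hA x with h | h <;> simp [h, hfa, hfb]
  have hv0 : ∀ m, v (P m) = α := by
    intro m
    rcases hA (w m) with h | h
    · have hb := hblock m 0 (by simp [h, hfa])
      simpa [h, hfa] using hb.symm
    · have hb := hblock m 0 (by simp [h, hfb])
      simpa [h, hfb] using hb.symm
  have hvβ : ∀ m, w m = β → v (P m + 1) = β := by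
    intro m h
    have hb := hblock m 1 (by simp [h, hfb])
    simpa [h, hfb] using hb.symm
  have hpα : ∀ m, w m = α → P (m+1) = P m + 1 := by
    intro m h; simp [hPsucc, h, hfa]
  have hpβ : ∀ m, w m = β → P (m+1) = P m + 2 := by
    intro m h; simp [hPsucc, h, hfb]
  have hwβ : ∀ m, v (P m + 1) = β → w m = β := by
    intro m hm
    rcases hA (w m) with h | h
    · exfalso
      have h1 := hv0 (m+1)
      rw [hpα m h] at h1
      exact hab (h1.symm.trans hm)
    · exact h
  have hcover : ∀ k, ∃ n, P n ≤ k ∧ k < P (n+1) := by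
    intro k
    induction k with
    | zero =>
      refine ⟨0, by omega, ?_⟩
      have h1 := hPsucc 0; have h2 := hfpos (w 0); omega
    | succ k ih =>
      obtain ⟨n, h1, h2⟩ := ih
      by_cases h : k + 1 < P (n+1)
      · exact ⟨n, by omega, h⟩
      · refine ⟨n+1, by omega, ?_⟩
        have h3 := hPsucc (n+1); have h4 := hfpos (w (n+1)); omega
  have hβpos : ∀ k, v k = β → ∃ n, w n = β ∧ k = P n + 1 := by
    intro k hk
    obtain ⟨n, h1, h2⟩ := hcover k
    rcases hA (w n) with h | h
    · exfalso
      have h3 := hpα n h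
      have hkpn : k = P n := by omega
      rw [hkpn] at hk
      exact hab ((hv0 n).symm.trans hk)
    · have h3 := hpβ n h
      rcases (by omega : k = P n ∨ k = P n + 1) with hk' | hk'
      · exfalso; rw [hk'] at hk; exact hab ((hv0 n).symm.trans hk)
      · exact ⟨n, h, hk'⟩
  have D1 : ∀ u : List A, ∀ m, (∀ i (h : i < u.length), u[i] = v (P m + i)) →
      ∀ j (h : j < (dec α β u).length), (dec α β u)[j] = w (m + j) := by
    intro u
    induction u using dec.induct β with
    | case1 => intro m _ j hj; simp [dec] at hj
    | case2 x => intro m _ j hj; simp [dec] at hj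
    | case3 x rest ih =>
      intro m hocc
      have hwm : w m = β := by
        apply hwβ
        have := hocc 1 (by simp)
        simpa using this.symm
      have hrest : ∀ i (h : i < rest.length), rest[i] = v (P (m+1) + i) := by
        intro i hi
        have h2 := hocc (i+2) (by simp; omega)
        rw [hpβ m hwm]
        rw [show P m + (i+2) = P m + 2 + i from by omega] at h2
        simpa using h2
      rw [show dec α β (x :: β :: rest) = β :: dec α β rest from by simp [dec]]
      intro j hj
      match j, hj with
      | 0, _ => simpa using hwm.symm
      | (j+1), hj =>
        rw [show m + (j+1) = m + 1 + j from by omega]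
        have hj' : j < (dec α β rest).length := by simp at hj; omega
        simpa using ih (m+1) hrest j hj'
    | case4 x y rest hy ih =>
      intro m hocc
      have hwm : w m = α := by
        rcases hA (w m) with h | h
        · exact h
        · exfalso
          have h2 : y = v (P m + 1) := by exact hocc 1 (by simp)
          exact hy (h2.trans (hvβ m h))
      have htail : ∀ i (h : i < (y :: rest).length), (y :: rest)[i] = v (P (m+1) + i) := by
        intro i hi
        have h2 := hocc (i+1) (by simp only [List.length_cons] at hi ⊢; omega)
        rw [hpα m hwm]
        rw [show P m + (i+1) = P m + 1 + i from by omega] at h2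
        simpa using h2
      rw [show dec α β (x :: y :: rest) = α :: dec α β (y :: rest) from by simp [dec, hy]]
      intro j hj
      match j, hj with
      | 0, _ => simpa using hwm.symm
      | (j+1), hj =>
        rw [show m + (j+1) = m + 1 + j from by omega]
        have hj' : j < (dec α β (y :: rest)).length := by simp at hj; omega
        simpa using ih (m+1) htail j hj'
  have D2 : ∀ u : List A, ∀ m m', (∀ i (h : i < u.length), u[i] = v (P m + i)) →
      (∀ j (h : j < (dec α β u).length), (dec α β u)[j] = w (m' + j)) →
      ∀ i (h : i < u.length), u[i] = v (P m' + i) := by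
    intro u
    induction u using dec.induct β with
    | case1 => intro m m' _ _ i hi; simp at hi
    | case2 x =>
      intro m m' hocc _ i hi
      match i, hi with
      | 0, _ =>
        have hx : x = α := by
          have h0 := hocc 0 (by simp)
          simp at h0
          rw [h0, hv0 m]
        simpa [hx] using (hv0 m').symm
    | case3 x rest ih =>
      intro m m' hocc hmatch
      rw [show dec α β (x :: β :: rest) = β :: dec α β rest from by simp [dec]] at hmatch
      have hx : x = α := by
        have h0 := hocc 0 (by simp)
        simp at h0
        rw [h0, hv0 m]
      have hwm' : w m' = β := by
        have := hmatch 0 (by simp)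
        simpa using this.symm
      have hwm : w m = β := by
        apply hwβ
        have := hocc 1 (by simp)
        simpa using this.symm
      have hrest : ∀ i (h : i < rest.length), rest[i] = v (P (m+1) + i) := by
        intro i hi
        have h2 := hocc (i+2) (by simp; omega)
        rw [hpβ m hwm]
        rw [show P m + (i+2) = P m + 2 + i from by omega] at h2
        simpa using h2
      have hmatch' : ∀ j (h : j < (dec α β rest).length),
          (dec α β rest)[j] = w ((m'+1) + j) := by
        intro j hj
        have h2 := hmatch (j+1) (by simpa using hj)
        rw [show m' + (j+1) = m' + 1 + j from by omega] at h2
        simpa using h2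
      have hrest' := ih (m+1) (m'+1) hrest hmatch'
      intro i hi
      match i, hi with
      | 0, _ => simpa [hx] using (hv0 m').symm
      | 1, _ => simpa using (hvβ m' hwm').symm
      | (i+2), hi =>
        have h2 := hrest' i (by simp at hi; omega)
        rw [hpβ m' hwm'] at h2
        rw [show P m' + (i+2) = P m' + 2 + i from by omega]
        simpa using h2
    | case4 x y rest hy ih =>
      intro m m' hocc hmatch
      rw [show dec α β (x :: y :: rest) = α :: dec α β (y :: rest) from by simp [dec, hy]]
        at hmatch
      have hx : x = α := by
        have h0 := hocc 0 (by simp)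
        simp at h0
        rw [h0, hv0 m]
      have hwm : w m = α := by
        rcases hA (w m) with h | h
        · exact h
        · exfalso
          have h2 : y = v (P m + 1) := by exact hocc 1 (by simp)
          exact hy (h2.trans (hvβ m h))
      have hwm' : w m' = α := by
        have := hmatch 0 (by simp)
        simpa using this.symm
      have htail : ∀ i (h : i < (y :: rest).length), (y :: rest)[i] = v (P (m+1) + i) := by
        intro i hi
        have h2 := hocc (i+1) (by simp only [List.length_cons] at hi ⊢; omega)
        rw [hpα m hwm]
        rw [show P m + (i+1) = P m + 1 + i from by omega] at h2
        simpa using h2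
      have hmatch' : ∀ j (h : j < (dec α β (y :: rest)).length),
          (dec α β (y :: rest))[j] = w ((m'+1) + j) := by
        intro j hj
        have h2 := hmatch (j+1) (by simpa using hj)
        rw [show m' + (j+1) = m' + 1 + j from by omega] at h2
        simpa using h2
      have htail' := ih (m+1) (m'+1) htail hmatch'
      intro i hi
      match i, hi with
      | 0, _ => simpa [hx] using (hv0 m').symm
      | (i+1), hi =>
        have h2 := htail' i (by simp only [List.length_cons] at hi ⊢; omega)
        rw [hpα m' hwm'] at h2
        rw [show P m' + (i+1) = P m' + 1 + i from by omega]
        simpa using h2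
  intro u x y hxy hxu hyu
  have hfac : FactorI v (α :: u) ∧ FactorI v (β :: u) := by
    rcases hA x with hx | hx <;> rcases hA y with hy | hy <;> subst hx <;> subst hy
    · exact absurd rfl hxy
    · exact ⟨hxu, hyu⟩
    · exact ⟨hyu, hxu⟩
    · exact absurd rfl hxy
  obtain ⟨⟨k1, hk1⟩, ⟨k2, hk2⟩⟩ := hfac
  by_cases hne : u = []
  · subst hne; intro i hi; simp at hi
  have hlen : 0 < u.length := List.length_pos_iff.mpr hne
  have hvk2 : v k2 = β := by exact (hk2 0 (by simp)).symm
  obtain ⟨n1, hwn1, hk2eq⟩ := hβpos k2 hvk2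
  have hocc1 : ∀ i (h : i < u.length), u[i] = v (P (n1+1) + i) := by
    intro i hi
    have h3 := hk2 (i+1) (by simp; omega)
    rw [hpβ n1 hwn1]
    rw [hk2eq, show P n1 + 1 + (i+1) = P n1 + 2 + i from by omega] at h3
    simpa using h3
  have hu0 : u[0]'hlen = α := by
    have h := hocc1 0 hlen
    rw [Nat.add_zero, hv0 (n1+1)] at h
    exact h
  have hvk1 : v k1 = α := by exact (hk1 0 (by simp)).symm
  obtain ⟨n2, hn2a, hn2b⟩ := hcover k1
  have hwn2' : w n2 = α ∧ k1 = P n2 := by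
    rcases hA (w n2) with h | h
    · have h2 := hpα n2 h
      exact ⟨h, by omega⟩
    · exfalso
      have h2 := hpβ n2 h
      rcases (by omega : k1 = P n2 ∨ k1 = P n2 + 1) with hk | hk
      · have h3 := hk1 1 (by simp; omega)
        rw [hk] at h3
        simp at h3
        have h4 := hvβ n2 h
        exact hab (hu0.symm.trans (h3.trans h4))
      · rw [hk] at hvk1
        exact hab (hvk1.symm.trans (hvβ n2 h))
  obtain ⟨hwn2, hk1eq⟩ := hwn2'
  have hocc2 : ∀ i (h : i < u.length), u[i] = v (P (n2+1) + i) := by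
    intro i hi
    have h3 := hk1 (i+1) (by simp; omega)
    rw [hpα n2 hwn2]
    rw [hk1eq, show P n2 + (i+1) = P n2 + 1 + i from by omega] at h3
    simpa using h3
  have hm1 := D1 u (n1+1) hocc1
  have hm2 := D1 u (n2+1) hocc2
  have hfac1 : FactorI w (α :: dec α β u) := by
    refine ⟨n2, ?_⟩
    intro i hi
    match i, hi with
    | 0, _ => simpa using hwn2.symm
    | (i+1), hi =>
      have h2 := hm2 i (by simp at hi; omega)
      rw [show n2 + (i+1) = n2 + 1 + i from by omega]
      simpa using h2
  have hfac2 : FactorI w (β :: dec α β u) := by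
    refine ⟨n1, ?_⟩
    intro i hi
    match i, hi with
    | 0, _ => simpa using hwn1.symm
    | (i+1), hi =>
      have h2 := hm1 i (by simp at hi; omega)
      rw [show n1 + (i+1) = n1 + 1 + i from by omega]
      simpa using h2
  have hpre := hw (dec α β u) α β hab hfac1 hfac2
  have hmatch0 : ∀ j (h : j < (dec α β u).length), (dec α β u)[j] = w (0 + j) := by
    intro j hj
    rw [Nat.zero_add]
    exact hpre j hj
  have hfin := D2 u (n1+1) 0 hocc1 hmatch0
  intro i hi
  have h2 := hfin i hi
  rw [hP0, Nat.zero_add] at h2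
  exact h2

theorem binary_lsp_preserved {A : Type*} (a b : A) (hab : a ≠ b)
    (hA : ∀ x : A, x = a ∨ x = b) (f : A → List A)
    (hf : (f a = [a] ∧ f b = [a, b]) ∨ (f a = [b, a] ∧ f b = [b]))
    (w : ℕ → A) (hw : LSPInf w) (v : ℕ → A) (hv : IsImage f w v) :
    LSPInf v := by
  letI := Classical.decEq A
  rcases hf with ⟨h1, h2⟩ | ⟨h1, h2⟩
  · exact key_lemma a b hab hA f h1 h2 w hw v hv
  · exact key_lemma b a hab.symm (fun x => (hA x).symm) f h2 h1 w hw v hv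
end

section
/- Let A = {a, b} be a two-letter alphabet (a ≠ b), and let τ_a and τ_b be the endomorphisms of A* defined by τ_a(a) = a, τ_a(b) = ab and τ_b(a) = ba, τ_b(b) = b. An infinite word w over A is LSP if and only if w is {τ_a, τ_b}-adic, i.e., there exist a sequence (f_n)_{n≥1} with each f_n ∈ {τ_a, τ_b} and a sequence of infinite words (w_n)_{n≥1} over A with w_1 = w and w_n = f_n(w_{n+1}) for all n ≥ 1. -/
namespace LSPAux

open Classical in
noncomputable def der {A : Type*} (c c' : A) : List A → List A
  | [] => []
  | [_] => []
  | _ :: y :: rest => if y = c' then c' :: der c c' rest else c :: der c c' (y :: rest)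
termination_by l => l.length

theorem der_len_le {A : Type*} (c c' : A) : ∀ (u : List A), (der c c' u).length ≤ u.length
  | [] => by simp [der]
  | [x] => by simp [der]
  | x :: y :: rest => by
    rw [der]
    split
    · simpa using Nat.le_succ_of_le (der_len_le c c' rest)
    · simpa using Nat.succ_le_succ (der_len_le c c' (y :: rest))
termination_by u => u.length

theorem der_len_lt {A : Type*} (c c' : A) : ∀ (u : List A), u ≠ [] → (der c c' u).length < u.length
  | [x], _ => by simp [der]
  | x :: y :: rest, _ => by
    rw [der]
    split
    · simpa using Nat.lt_succ_of_le (der_len_le c c' rest)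
    · simpa using Nat.succ_lt_succ (der_len_lt c c' (y :: rest) (by simp))
termination_by u => u.length

def Pos {A : Type*} (f : A → List A) (v : ℕ → A) : ℕ → ℕ
  | 0 => 0
  | n + 1 => Pos f v n + (f (v n)).length

section Back

variable {A : Type*} {c c' : A} {f : A → List A} {v w : ℕ → A}
variable (hcc : c ≠ c') (hA2 : ∀ x : A, x = c ∨ x = c')
variable (hfc : f c = [c]) (hfc' : f c' = [c, c']) (him : IsImage f v w)

theorem flat_len (n : ℕ) : (((List.range n).map v).flatMap f).length = Pos f v n := by
  induction n with
  | zero => simp [Pos]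
  | succ n ih =>
    rw [List.range_succ, List.map_append, List.flatMap_append]
    simp [Pos, ih]

theorem gar {A : Type*} (l₁ l₂ : List A) (i k : ℕ) (hk : k = l₁.length + i)
    (h : i < l₂.length) (hK : k < (l₁ ++ l₂).length) : (l₁ ++ l₂)[k] = l₂[i] := by
  subst hk
  rw [List.getElem_append_right (Nat.le_add_right _ _)]
  simp

include him in
theorem block_eq (n : ℕ) {i : ℕ} (h : i < (f (v n)).length) :
    (f (v n))[i] = w (Pos f v n + i) := by
  have key := him (n + 1)
  rw [List.range_succ, List.map_append, List.flatMap_append] at key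
  simp only [List.map_cons, List.map_nil, List.flatMap_cons, List.flatMap_nil,
    List.append_nil] at key
  have h2 : Pos f v n + i < (((List.range n).map v).flatMap f ++ f (v n)).length := by
    simp [flat_len (v := v) (f := f) n]; omega
  have h3 := key _ h2
  rw [← h3]
  exact (gar _ _ i _ (by rw [flat_len]) h h2).symm

include hfc in
theorem blk1 {n : ℕ} (h : v n = c) : Pos f v (n + 1) = Pos f v n + 1 := by
  simp [Pos, h, hfc]

include hfc' in
theorem blk2 {n : ℕ} (h : v n = c') : Pos f v (n + 1) = Pos f v n + 2 := by
  simp [Pos, h, hfc']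

include hA2 hfc hfc' him in
theorem wP (n : ℕ) : w (Pos f v n) = c := by
  rcases hA2 (v n) with h | h
  · have := block_eq him n (i := 0) (by rw [h, hfc]; simp)
    simp [h, hfc] at this; simpa using this.symm
  · have := block_eq him n (i := 0) (by rw [h, hfc']; simp)
    simp [h, hfc'] at this; simpa using this.symm

include hfc' him in
theorem wblk2 {n : ℕ} (h : v n = c') : w (Pos f v n + 1) = c' := by
  have := block_eq him n (i := 1) (by rw [h, hfc']; simp)
  simp [h, hfc'] at this; simpa using this.symm

include hA2 hfc hfc' in
theorem pos_lt_s10 (n : ℕ) : Pos f v n < Pos f v (n + 1) := by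
  rcases hA2 (v n) with h | h
  · rw [blk1 hfc h]; omega
  · rw [blk2 hfc' h]; omega

include hA2 hfc hfc' in
theorem cover (k : ℕ) : ∃ n, Pos f v n ≤ k ∧ k < Pos f v (n + 1) := by
  induction k with
  | zero => exact ⟨0, Nat.le_refl _, pos_lt_s10 hA2 hfc hfc' 0⟩
  | succ k ih =>
    obtain ⟨n, h1, h2⟩ := ih
    rcases Nat.lt_or_ge (k + 1) (Pos f v (n + 1)) with h | h
    · exact ⟨n, by omega, h⟩
    · exact ⟨n + 1, by omega, by have := pos_lt_s10 hA2 hfc hfc' (v := v) (n + 1); omega⟩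

include hcc hA2 hfc hfc' him in
theorem wc' {k : ℕ} (h : w k = c') : ∃ n, v n = c' ∧ k = Pos f v n + 1 := by
  obtain ⟨n, h1, h2⟩ := cover hA2 hfc hfc' (v := v) k
  rcases hA2 (v n) with hv | hv
  · rw [blk1 hfc hv] at h2
    have : k = Pos f v n := by omega
    exact absurd (this ▸ h) (by rw [wP hA2 hfc hfc' him n]; exact hcc)
  · rw [blk2 hfc' hv] at h2
    rcases Nat.lt_or_ge k (Pos f v n + 1) with h3 | h3
    · have : k = Pos f v n := by omega
      exact absurd (this ▸ h) (by rw [wP hA2 hfc hfc' him n]; exact hcc)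
    · exact ⟨n, hv, by omega⟩

include hcc hA2 hfc hfc' him in
theorem wc {k : ℕ} (h : w k = c) : ∃ n, k = Pos f v n := by
  obtain ⟨n, h1, h2⟩ := cover hA2 hfc hfc' (v := v) k
  rcases hA2 (v n) with hv | hv
  · rw [blk1 hfc hv] at h2
    exact ⟨n, by omega⟩
  · rw [blk2 hfc' hv] at h2
    rcases Nat.lt_or_ge k (Pos f v n + 1) with h3 | h3
    · exact ⟨n, by omega⟩
    · have : k = Pos f v n + 1 := by omega
      rw [this, wblk2 hfc' him hv] at h
      exact absurd h.symm hcc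

include hcc hA2 hfc hfc' him in
theorem occ : ∀ (u : List A) (r : ℕ),
    (∀ i (h : i < u.length), u[i] = w (Pos f v r + i)) →
    ∀ i (h : i < (der c c' u).length), (der c c' u)[i] = v (r + i)
  | [], _, _ => by simp [der]
  | [x], _, _ => by simp [der]
  | x :: y :: rest, r, hu => by
    have hy : y = w (Pos f v r + 1) := by exact hu 1 (by simp)
    rcases hA2 (v r) with hv | hv
    · have h1 : Pos f v (r + 1) = Pos f v r + 1 := blk1 hfc hv
      have hyc : y = c := by rw [hy, ← h1]; exact wP hA2 hfc hfc' him (r + 1)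
      have hyne : y ≠ c' := by rw [hyc]; exact hcc
      simp only [der, if_neg hyne]
      intro i h
      cases i with
      | zero => simpa using hv.symm
      | succ i =>
        have hrec := occ (y :: rest) (r + 1) (fun j hj => by
          have := hu (j + 1) (by simpa using Nat.succ_lt_succ hj)
          rw [h1]
          rw [show Pos f v r + 1 + j = Pos f v r + (j + 1) by omega]
          simpa using this)
        have := hrec i (by simpa using h)
        rw [show r + (i + 1) = r + 1 + i by omega]
        simpa using this
    · have h2 : Pos f v (r + 1) = Pos f v r + 2 := blk2 hfc' hv
      have hyc' : y = c' := by rw [hy]; exact wblk2 hfc' him hv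
      simp only [der, if_pos hyc']
      intro i h
      cases i with
      | zero => simpa using hv.symm
      | succ i =>
        have hrec := occ rest (r + 1) (fun j hj => by
          have := hu (j + 2) (by simpa using Nat.succ_lt_succ (Nat.succ_lt_succ hj))
          rw [h2]
          rw [show Pos f v r + 2 + j = Pos f v r + (j + 2) by omega]
          simpa using this)
        have := hrec i (by simpa using h)
        rw [show r + (i + 1) = r + 1 + i by omega]
        simpa using this
termination_by u => u.length

include hcc hA2 hfc hfc' him in
theorem recon : ∀ (u : List A) (r s : ℕ),
    (∀ i (h : i < u.length), u[i] = w (Pos f v r + i)) →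
    (∀ i (h : i < (der c c' u).length), (der c c' u)[i] = v (s + i)) →
    ∀ i (h : i < u.length), u[i] = w (Pos f v s + i)
  | [], _, _, _, _ => by simp
  | [x], r, s, hu, _ => by
    intro i h
    simp only [List.length_cons, List.length_nil] at h
    have hi : i = 0 := by omega
    subst hi
    have hx : x = w (Pos f v r) := by simpa using hu 0 (by simp)
    have : x = c := by rw [hx]; exact wP hA2 hfc hfc' him r
    simp only [List.getElem_cons_zero, Nat.add_zero]
    rw [this, (wP hA2 hfc hfc' him s)]
  | x :: y :: rest, r, s, hu, hd => by
    have hx : x = w (Pos f v r) := by exact hu 0 (by simp)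
    have hxc : x = c := by rw [hx]; exact wP hA2 hfc hfc' him r
    have hy : y = w (Pos f v r + 1) := by exact hu 1 (by simp)
    rcases hA2 (v r) with hv | hv
    · -- v r = c
      have h1 : Pos f v (r + 1) = Pos f v r + 1 := blk1 hfc hv
      have hyc : y = c := by rw [hy, ← h1]; exact wP hA2 hfc hfc' him (r + 1)
      have hyne : y ≠ c' := by rw [hyc]; exact hcc
      simp only [der, if_neg hyne] at hd
      have hvs : v s = c := by
        have := hd 0 (by simp)
        simpa using this.symm
      have hs1 : Pos f v (s + 1) = Pos f v s + 1 := blk1 hfc hvs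
      have hrec := recon (y :: rest) (r + 1) (s + 1)
        (fun j hj => by
          have := hu (j + 1) (by simpa using Nat.succ_lt_succ hj)
          rw [h1, show Pos f v r + 1 + j = Pos f v r + (j + 1) by omega]
          simpa using this)
        (fun j hj => by
          have := hd (j + 1) (by simpa using Nat.succ_lt_succ hj)
          rw [show s + 1 + j = s + (j + 1) by omega]
          simpa using this)
      intro i h
      cases i with
      | zero =>
        simp only [List.getElem_cons_zero, Nat.add_zero]
        rw [hxc, wP hA2 hfc hfc' him s]
      | succ i =>
        have := hrec i (by simpa using h)
        rw [hs1, show Pos f v s + 1 + i = Pos f v s + (i + 1) by omega] at this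
        simpa using this
    · -- v r = c'
      have h2 : Pos f v (r + 1) = Pos f v r + 2 := blk2 hfc' hv
      have hyc' : y = c' := by rw [hy]; exact wblk2 hfc' him hv
      simp only [der, if_pos hyc'] at hd
      have hvs : v s = c' := by
        have := hd 0 (by simp)
        simpa using this.symm
      have hs2 : Pos f v (s + 1) = Pos f v s + 2 := blk2 hfc' hvs
      have hws : w (Pos f v s + 1) = c' := wblk2 hfc' him hvs
      have hrec := recon rest (r + 1) (s + 1)
        (fun j hj => by
          have := hu (j + 2) (by simpa using Nat.succ_lt_succ (Nat.succ_lt_succ hj))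
          rw [h2, show Pos f v r + 2 + j = Pos f v r + (j + 2) by omega]
          simpa using this)
        (fun j hj => by
          have := hd (j + 1) (by simpa using Nat.succ_lt_succ hj)
          rw [show s + 1 + j = s + (j + 1) by omega]
          simpa using this)
      intro i h
      cases i with
      | zero =>
        simp only [List.getElem_cons_zero, Nat.add_zero]
        rw [hxc, wP hA2 hfc hfc' him s]
      | succ i =>
        cases i with
        | zero =>
          simp only [List.getElem_cons_succ, List.getElem_cons_zero]
          rw [hyc', hws]
        | succ i =>
          have := hrec i (by simpa using h)
          rw [hs2, show Pos f v s + 2 + i = Pos f v s + (i + 2) by omega] at this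
          simpa using this
termination_by u => u.length

include hA2 hfc hfc' in
theorem pos_mono {m n : ℕ} (h : m ≤ n) : Pos f v m ≤ Pos f v n := by
  induction n with
  | zero => simpa [Nat.le_zero.mp h]
  | succ n ih =>
    rcases Nat.lt_or_ge m (n + 1) with h' | h'
    · exact le_trans (ih (by omega)) (le_of_lt (pos_lt_s10 hA2 hfc hfc' (v := v) n))
    · have : m = n + 1 := by omega
      simp [this]

include hcc hA2 hfc hfc' him in
theorem desub (u : List A) (hne : u ≠ [])
    (hcu : FactorI w (c :: u)) (hc'u : FactorI w (c' :: u)) :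
    FactorI v (c :: der c c' u) ∧ FactorI v (c' :: der c c' u) ∧
      (PrefI (der c c' u) v → PrefI u w) := by
  obtain ⟨k₂, hk₂⟩ := hc'u
  have hwk₂ : w k₂ = c' := by exact (hk₂ 0 (by simp)).symm
  obtain ⟨n₂, hvn₂, hkn₂⟩ := wc' hcc hA2 hfc hfc' him hwk₂
  have hb₂ : Pos f v (n₂ + 1) = k₂ + 1 := by rw [blk2 hfc' hvn₂]; omega
  have hu₂ : ∀ i (h : i < u.length), u[i] = w (Pos f v (n₂ + 1) + i) := by
    intro i h
    have := hk₂ (i + 1) (by simpa using Nat.succ_lt_succ h)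
    rw [hb₂, show k₂ + 1 + i = k₂ + (i + 1) by omega]
    simpa using this
  have hd₂ := occ hcc hA2 hfc hfc' him u (n₂ + 1) hu₂
  -- u starts with c
  have hu0 : ∃ h0 : 0 < u.length, u[0] = c := by
    rcases u with _ | ⟨z, u'⟩
    · exact absurd rfl hne
    · refine ⟨by simp, ?_⟩
      have := hu₂ 0 (by simp)
      simpa [wP hA2 hfc hfc' him (n₂ + 1)] using this
  obtain ⟨h0, hu0⟩ := hu0
  -- the c-occurrence
  obtain ⟨k₁, hk₁⟩ := hcu
  have hwk₁ : w k₁ = c := by exact (hk₁ 0 (by simp)).symm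
  have hwk₁' : w (k₁ + 1) = c := by
    have := hk₁ 1 (by simp; omega)
    rcases u with _ | ⟨z, u'⟩
    · exact absurd rfl hne
    · simp at this hu0
      rw [← this, hu0]
  obtain ⟨n₁, hn₁⟩ := wc hcc hA2 hfc hfc' him hwk₁
  obtain ⟨m, hm⟩ := wc hcc hA2 hfc hfc' him hwk₁'
  have hn₁m : n₁ < m := by
    by_contra hcon
    have := pos_mono hA2 hfc hfc' (v := v) (Nat.ge_of_not_lt hcon)
    omega
  have hb₁ : Pos f v (n₁ + 1) = k₁ + 1 := by
    have h1 := pos_mono hA2 hfc hfc' (v := v) (show n₁ + 1 ≤ m by omega)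
    have h2 := pos_lt_s10 hA2 hfc hfc' (v := v) n₁
    omega
  have hvn₁ : v n₁ = c := by
    rcases hA2 (v n₁) with h | h
    · exact h
    · have := blk2 hfc' h (v := v) (f := f)
      omega
  have hu₁ : ∀ i (h : i < u.length), u[i] = w (Pos f v (n₁ + 1) + i) := by
    intro i h
    have := hk₁ (i + 1) (by simpa using Nat.succ_lt_succ h)
    rw [hb₁, show k₁ + 1 + i = k₁ + (i + 1) by omega]
    simpa using this
  have hd₁ := occ hcc hA2 hfc hfc' him u (n₁ + 1) hu₁
  refine ⟨⟨n₁, ?_⟩, ⟨n₂, ?_⟩, ?_⟩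
  · intro i h
    cases i with
    | zero => simpa using hvn₁.symm
    | succ i =>
      have := hd₁ i (by simpa using h)
      rw [show n₁ + (i + 1) = n₁ + 1 + i by omega]
      simpa using this
  · intro i h
    cases i with
    | zero => simpa using hvn₂.symm
    | succ i =>
      have := hd₂ i (by simpa using h)
      rw [show n₂ + (i + 1) = n₂ + 1 + i by omega]
      simpa using this
  · intro hpre
    have := recon hcc hA2 hfc hfc' him u (n₂ + 1) 0 hu₂
      (fun i h => by simpa using hpre i h)
    intro i h
    have h0' := this i h
    simpa [Pos] using h0'

end Back

theorem backward {A : Type*} (a b : A) (hab : a ≠ b) (hA : ∀ x : A, x = a ∨ x = b)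
    (f : ℕ → A → List A) (W : ℕ → ℕ → A)
    (hf : ∀ n, (f n a = [a] ∧ f n b = [a, b]) ∨ (f n a = [b, a] ∧ f n b = [b]))
    (him : ∀ n, IsImage (f n) (W (n + 1)) (W n)) :
    LSPInf (W 0) := by
  have main : ∀ (L : ℕ) (u : List A), u.length < L → ∀ (n : ℕ) (x y : A), x ≠ y →
      FactorI (W n) (x :: u) → FactorI (W n) (y :: u) → PrefI u (W n) := by
    intro L
    induction L with
    | zero => intro u h; omega
    | succ L ih =>
      intro u hu n x y hxy hxu hyu
      rcases eq_or_ne u [] with rfl | hne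
      · intro i h; simp at h
      -- reduce to ordered pair (c, c') and apply desub
      have key : ∀ c c' : A, c ≠ c' → (∀ z : A, z = c ∨ z = c') →
          f n c = [c] → f n c' = [c, c'] →
          FactorI (W n) (c :: u) → FactorI (W n) (c' :: u) → PrefI u (W n) := by
        intro c c' hcc hA2 hfc hfc' hcu hc'u
        obtain ⟨F1, F2, R⟩ := desub hcc hA2 hfc hfc' (him n) u hne hcu hc'u
        refine R (ih (der c c' u) ?_ (n + 1) c c' hcc F1 F2)
        have := der_len_lt c c' u hne
        omega
      have horder : FactorI (W n) (x :: u) → FactorI (W n) (y :: u) →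
          ∀ c c' : A, c ≠ c' → (∀ z : A, z = c ∨ z = c') →
          f n c = [c] → f n c' = [c, c'] → PrefI u (W n) := by
        intro h1 h2 c c' hcc hA2 hfc hfc'
        rcases hA2 x with rfl | rfl <;> rcases hA2 y with rfl | rfl
        · exact absurd rfl hxy
        · exact key _ _ hcc hA2 hfc hfc' h1 h2
        · exact key _ _ hcc hA2 hfc hfc' h2 h1
        · exact absurd rfl hxy
      rcases hf n with ⟨h1, h2⟩ | ⟨h1, h2⟩
      · exact horder hxu hyu a b hab hA h1 h2
      · exact horder hxu hyu b a hab.symm (fun z => (hA z).symm) h2 h1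
  intro u x y hxy hxu hyu
  exact main (u.length + 1) u (by omega) 0 x y hxy hxu hyu

/-! ### Forward direction -/

open Classical in
noncomputable def PwC {A : Type*} (c' : A) (v : ℕ → A) : ℕ → ℕ
  | 0 => 0
  | n + 1 => PwC c' v n + if v (PwC c' v n + 1) = c' then 2 else 1

noncomputable def DwC {A : Type*} (c' : A) (v : ℕ → A) : ℕ → A :=
  fun n => v (PwC c' v n + 1)

open Classical in
noncomputable def Fm {A : Type*} (c x : A) : List A := if x = c then [c] else [c, x]

section Fwd

variable {A : Type*} {c c' : A} {v : ℕ → A}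
variable (hcc : c ≠ c') (hA2 : ∀ x : A, x = c ∨ x = c')
variable (hv0 : v 0 = c) (hlsp : LSPInf v)

theorem Fm_c : Fm c c = [c] := if_pos rfl

theorem Fm_c' (h : c ≠ c') : Fm c c' = [c, c'] := if_neg h.symm

include hcc hA2 hv0 hlsp in
theorem noc'c' {k : ℕ} (h1 : v k = c') (h2 : v (k + 1) = c') : False := by
  classical
  have hex : ∃ m, v m = c' := ⟨k, h1⟩
  set m := Nat.find hex with hm
  have hvm : v m = c' := Nat.find_spec hex
  have hm0 : m ≠ 0 := fun h => hcc (by rw [← hv0, ← h, hvm])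
  have hprev : v (m - 1) = c := by
    rcases hA2 (v (m - 1)) with h | h
    · exact h
    · exfalso
      have h3 : Nat.find hex ≤ m - 1 := Nat.find_le h
      omega
  have fac1 : FactorI v (c :: [c']) := by
    refine ⟨m - 1, ?_⟩
    intro i hi
    match i with
    | 0 => simpa using hprev.symm
    | 1 => simp only [List.getElem_cons_succ, List.getElem_cons_zero]
           rw [show m - 1 + 1 = m by omega, hvm]
  have fac2 : FactorI v (c' :: [c']) := ⟨k, by
    intro i hi
    match i with
    | 0 => simpa using h1.symm
    | 1 => simpa using h2.symm⟩
  have := hlsp [c'] c c' hcc fac1 fac2 0 (by simp)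
  simp at this
  exact hcc (hv0.symm.trans this.symm)

include hcc hA2 hv0 hlsp in
theorem vP (n : ℕ) : v (PwC c' v n) = c := by
  induction n with
  | zero => simpa [PwC]
  | succ n ih =>
    by_cases h : v (PwC c' v n + 1) = c'
    · have hP : PwC c' v (n + 1) = PwC c' v n + 2 := by rw [PwC, if_pos h]
      rw [hP]
      rcases hA2 (v (PwC c' v n + 2)) with h2 | h2
      · exact h2
      · exact absurd (noc'c' hcc hA2 hv0 hlsp h
          (by rw [show PwC c' v n + 1 + 1 = PwC c' v n + 2 by omega]; exact h2)) id
    · have hP : PwC c' v (n + 1) = PwC c' v n + 1 := by rw [PwC, if_neg h]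
      rw [hP]
      rcases hA2 (v (PwC c' v n + 1)) with h2 | h2
      · exact h2
      · exact absurd h2 h

theorem PwC_blk2 {n : ℕ} (h : v (PwC c' v n + 1) = c') :
    PwC c' v (n + 1) = PwC c' v n + 2 := by rw [PwC, if_pos h]

theorem PwC_blk1 {n : ℕ} (h : v (PwC c' v n + 1) ≠ c') :
    PwC c' v (n + 1) = PwC c' v n + 1 := by rw [PwC, if_neg h]

include hcc hA2 hv0 hlsp in
theorem imgocc : ∀ (u' : List A) (j : ℕ),
    (∀ i (h : i < u'.length), u'[i] = DwC c' v (j + i)) →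
    PwC c' v (j + u'.length) = PwC c' v j + (u'.flatMap (Fm c)).length ∧
    ∀ i (h : i < (u'.flatMap (Fm c)).length), (u'.flatMap (Fm c))[i] = v (PwC c' v j + i)
  | [], j, _ => by simp
  | x :: rest, j, hu => by
    have hx : x = v (PwC c' v j + 1) := by exact hu 0 (by simp)
    have hrest : ∀ i (h : i < rest.length), rest[i] = DwC c' v ((j + 1) + i) := by
      intro i h
      have := hu (i + 1) (by simpa using Nat.succ_lt_succ h)
      rw [show j + 1 + i = j + (i + 1) by omega]
      simpa using this
    obtain ⟨ihlen, ihel⟩ := imgocc rest (j + 1) hrest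
    rcases hA2 x with hxc | hxc
    · -- x = c : block of length 1
      have hFm : Fm c x = [c] := by rw [hxc]; exact Fm_c
      have hb : v (PwC c' v j + 1) ≠ c' := by rw [← hx, hxc]; exact hcc
      have hP : PwC c' v (j + 1) = PwC c' v j + 1 := PwC_blk1 hb
      constructor
      · rw [show j + (x :: rest).length = (j + 1) + rest.length by simp; omega]
        rw [ihlen, hP]
        simp only [List.flatMap_cons, hFm, List.length_append, List.length_cons,
          List.length_nil]
        omega
      · intro i h
        simp only [List.flatMap_cons, hFm] at h ⊢
        cases i with
        | zero => simpa using (vP hcc hA2 hv0 hlsp j).symm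
        | succ i =>
          simp only [List.cons_append, List.nil_append, List.getElem_cons_succ]
          have := ihel i (by simpa using h)
          rw [hP] at this
          rw [show PwC c' v j + (i + 1) = PwC c' v j + 1 + i by omega]
          exact this
    · -- x = c' : block of length 2
      have hFm : Fm c x = [c, c'] := by rw [hxc]; exact Fm_c' hcc
      have hb : v (PwC c' v j + 1) = c' := by rw [← hx, hxc]
      have hP : PwC c' v (j + 1) = PwC c' v j + 2 := PwC_blk2 hb
      constructor
      · rw [show j + (x :: rest).length = (j + 1) + rest.length by simp; omega]
        rw [ihlen, hP]
        simp only [List.flatMap_cons, hFm, List.length_append, List.length_cons,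
          List.length_nil]
        omega
      · intro i h
        simp only [List.flatMap_cons, hFm] at h ⊢
        cases i with
        | zero => simpa using (vP hcc hA2 hv0 hlsp j).symm
        | succ i =>
          cases i with
          | zero => simpa using hb.symm
          | succ i =>
            simp only [List.cons_append, List.nil_append, List.getElem_cons_succ]
            have := ihel i (by simpa using h)
            rw [hP] at this
            rw [show PwC c' v j + (i + 1 + 1) = PwC c' v j + 2 + i by omega]
            exact this
termination_by u' => u'.length

include hcc hA2 hv0 hlsp in
theorem image_step : IsImage (Fm c) (DwC c' v) v := by
  intro n i h
  have hocc : ∀ i (h : i < ((List.range n).map (DwC c' v)).length),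
      ((List.range n).map (DwC c' v))[i] = DwC c' v (0 + i) := by
    intro i h
    simp at h ⊢
  obtain ⟨_, hel⟩ := imgocc hcc hA2 hv0 hlsp ((List.range n).map (DwC c' v)) 0 hocc
  have := hel i h
  simpa [PwC] using this

theorem flat_cons_aux (c : A) : ∀ l : List A, ∃ t, l.flatMap (Fm c) ++ [c] = c :: t
  | [] => ⟨[], by simp⟩
  | z :: r => by
    by_cases hz : z = c
    · exact ⟨r.flatMap (Fm c) ++ [c], by simp [Fm, hz]⟩
    · exact ⟨z :: r.flatMap (Fm c) ++ [c], by simp [Fm, hz]⟩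

include hcc hA2 hv0 hlsp in
theorem fwd_recon : ∀ (u' : List A) (s : ℕ),
    (∀ i (h : i < (u'.flatMap (Fm c)).length + 1),
      (u'.flatMap (Fm c) ++ [c])[i]'(by simpa using h) = v (PwC c' v s + i)) →
    ∀ j (h : j < u'.length), u'[j] = DwC c' v (s + j)
  | [], _, _ => by simp
  | x :: rest, s, H => by
    rcases hA2 x with hxc | hxc
    · -- x = c
      have hFm : Fm c x = [c] := by rw [hxc]; exact Fm_c
      have hhead : v (PwC c' v s + 1) = c := by
        obtain ⟨t, ht⟩ := flat_cons_aux c rest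
        have := H 1 (by simp [hFm] <;> omega)
        simp only [List.flatMap_cons, hFm, List.cons_append, List.nil_append,
          List.getElem_cons_succ] at this
        rw [← this, List.getElem_of_eq ht]
        simp
      have hb : v (PwC c' v s + 1) ≠ c' := by rw [hhead]; exact hcc
      have hP : PwC c' v (s + 1) = PwC c' v s + 1 := PwC_blk1 hb
      have Htail : ∀ i (h : i < (rest.flatMap (Fm c)).length + 1),
          (rest.flatMap (Fm c) ++ [c])[i]'(by simpa using h) = v (PwC c' v (s + 1) + i) := by
        intro i h
        have := H (i + 1) (by simp at h; simp [hFm] <;> omega)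
        simp only [List.flatMap_cons, hFm, List.cons_append, List.nil_append,
          List.getElem_cons_succ] at this
        rw [hP, show PwC c' v s + 1 + i = PwC c' v s + (i + 1) by omega]
        exact this
      have ih := fwd_recon rest (s + 1) Htail
      intro j hj
      cases j with
      | zero =>
        simp only [List.getElem_cons_zero, Nat.add_zero, DwC]
        rw [hxc, hhead]
      | succ j =>
        have := ih j (by simpa using hj)
        rw [show s + (j + 1) = s + 1 + j by omega]
        simpa using this
    · -- x = c'
      have hFm : Fm c x = [c, c'] := by rw [hxc]; exact Fm_c' hcc
      have hhead : v (PwC c' v s + 1) = c' := by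
        have := H 1 (by simp [hFm])
        simp only [List.flatMap_cons, hFm, List.cons_append, List.nil_append,
          List.getElem_cons_succ, List.getElem_cons_zero] at this
        exact this.symm
      have hP : PwC c' v (s + 1) = PwC c' v s + 2 := PwC_blk2 hhead
      have Htail : ∀ i (h : i < (rest.flatMap (Fm c)).length + 1),
          (rest.flatMap (Fm c) ++ [c])[i]'(by simpa using h) = v (PwC c' v (s + 1) + i) := by
        intro i h
        have := H (i + 2) (by simp at h; simp [hFm] <;> omega)
        simp only [List.flatMap_cons, hFm, List.cons_append, List.nil_append,
          List.getElem_cons_succ] at this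
        rw [hP, show PwC c' v s + 2 + i = PwC c' v s + (i + 2) by omega]
        exact this
      have ih := fwd_recon rest (s + 1) Htail
      intro j hj
      cases j with
      | zero =>
        simp only [List.getElem_cons_zero, Nat.add_zero, DwC]
        rw [hxc, hhead]
      | succ j =>
        have := ih j (by simpa using hj)
        rw [show s + (j + 1) = s + 1 + j by omega]
        simpa using this
termination_by u' => u'.length

include hcc hA2 hv0 hlsp in
theorem lspD : LSPInf (DwC c' v) := by
  intro u' x y hxy hxu hyu
  have key : FactorI (DwC c' v) (c :: u') → FactorI (DwC c' v) (c' :: u') →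
      PrefI u' (DwC c' v) := by
    intro hcu hc'u
    have occU : ∀ j : ℕ, (∀ i (h : i < u'.length), u'[i] = DwC c' v (j + i)) →
        ∀ i (h : i < (u'.flatMap (Fm c) ++ [c]).length),
          (u'.flatMap (Fm c) ++ [c])[i] = v (PwC c' v j + i) := by
      intro j hocc i h
      obtain ⟨hlen, hel⟩ := imgocc hcc hA2 hv0 hlsp u' j hocc
      rcases Nat.lt_or_ge i (u'.flatMap (Fm c)).length with hi | hi
      · rw [List.getElem_append_left hi]
        exact hel i hi
      · have hieq : i = (u'.flatMap (Fm c)).length := by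
          simp only [List.length_append, List.length_cons, List.length_nil] at h
          omega
        subst hieq
        rw [List.getElem_append_right (le_refl _)]
        simp only [Nat.sub_self, List.getElem_cons_zero]
        rw [← hlen]
        exact (vP hcc hA2 hv0 hlsp (j + u'.length)).symm
    obtain ⟨j₁, hj₁⟩ := hcu
    have hD₁ : DwC c' v j₁ = c := by exact (hj₁ 0 (by simp)).symm
    have hu₁ : ∀ i (h : i < u'.length), u'[i] = DwC c' v ((j₁ + 1) + i) := by
      intro i h
      have := hj₁ (i + 1) (by simpa using Nat.succ_lt_succ h)
      rw [show j₁ + 1 + i = j₁ + (i + 1) by omega]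
      simpa using this
    have hP₁ : PwC c' v (j₁ + 1) = PwC c' v j₁ + 1 := PwC_blk1 (by
      have hD₁' : v (PwC c' v j₁ + 1) = c := hD₁
      rw [hD₁']; exact hcc)
    have facc : FactorI v (c :: (u'.flatMap (Fm c) ++ [c])) := by
      refine ⟨PwC c' v j₁, ?_⟩
      intro i h
      cases i with
      | zero => simpa using (vP hcc hA2 hv0 hlsp j₁).symm
      | succ i =>
        have := occU (j₁ + 1) hu₁ i (by simpa using h)
        rw [hP₁] at this
        rw [show PwC c' v j₁ + (i + 1) = PwC c' v j₁ + 1 + i by omega]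
        simpa using this
    obtain ⟨j₂, hj₂⟩ := hc'u
    have hD₂ : DwC c' v j₂ = c' := by exact (hj₂ 0 (by simp)).symm
    have hu₂ : ∀ i (h : i < u'.length), u'[i] = DwC c' v ((j₂ + 1) + i) := by
      intro i h
      have := hj₂ (i + 1) (by simpa using Nat.succ_lt_succ h)
      rw [show j₂ + 1 + i = j₂ + (i + 1) by omega]
      simpa using this
    have hP₂ : PwC c' v (j₂ + 1) = PwC c' v j₂ + 2 := PwC_blk2 hD₂
    have facc' : FactorI v (c' :: (u'.flatMap (Fm c) ++ [c])) := by
      refine ⟨PwC c' v j₂ + 1, ?_⟩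
      intro i h
      cases i with
      | zero => simpa [DwC] using hD₂.symm
      | succ i =>
        have := occU (j₂ + 1) hu₂ i (by simpa using h)
        rw [hP₂] at this
        rw [show PwC c' v j₂ + 1 + (i + 1) = PwC c' v j₂ + 2 + i by omega]
        simpa using this
    have hpre : PrefI (u'.flatMap (Fm c) ++ [c]) v := hlsp _ c c' hcc facc facc'
    have hrec := fwd_recon hcc hA2 hv0 hlsp u' 0
      (fun i h => by
        have := hpre i (by simpa using h)
        simpa [PwC] using this)
    intro j hj
    simpa using hrec j hj
  rcases hA2 x with hx1 | hx1 <;> rcases hA2 y with hy1 | hy1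
  · exact absurd (hx1.trans hy1.symm) hxy
  · rw [hx1] at hxu; rw [hy1] at hyu; exact key hxu hyu
  · rw [hx1] at hxu; rw [hy1] at hyu; exact key hyu hxu
  · exact absurd (hx1.trans hy1.symm) hxy

end Fwd

open Classical in
noncomputable def oth {A : Type*} (a b x : A) : A := if x = a then b else a

noncomputable def Wseq {A : Type*} (a b : A) (w : ℕ → A) : ℕ → ℕ → A
  | 0 => w
  | n + 1 => DwC (oth a b (Wseq a b w n 0)) (Wseq a b w n)

theorem forward {A : Type*} (a b : A) (hab : a ≠ b) (hA : ∀ x : A, x = a ∨ x = b)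
    (w : ℕ → A) (hw : LSPInf w) :
    ∃ (f : ℕ → A → List A) (W : ℕ → ℕ → A),
      (∀ n, (f n a = [a] ∧ f n b = [a, b]) ∨ (f n a = [b, a] ∧ f n b = [b])) ∧
      W 0 = w ∧ ∀ n, IsImage (f n) (W (n + 1)) (W n) := by
  have hA2b : ∀ x : A, x = b ∨ x = a := fun x => (hA x).symm
  have hotha : oth a b a = b := if_pos rfl
  have hothb : oth a b b = a := if_neg hab.symm
  have hprop : ∀ n, LSPInf (Wseq a b w n) := by
    intro n
    induction n with
    | zero => exact hw
    | succ n ih =>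
      show LSPInf (DwC (oth a b (Wseq a b w n 0)) (Wseq a b w n))
      rcases hA (Wseq a b w n 0) with h | h
      · rw [h, hotha]
        exact lspD hab hA h ih
      · rw [h, hothb]
        exact lspD hab.symm hA2b h ih
  refine ⟨fun n => Fm (Wseq a b w n 0), Wseq a b w, ?_, rfl, ?_⟩
  · intro n
    rcases hA (Wseq a b w n 0) with h | h
    · simp only [h]
      exact Or.inl ⟨Fm_c, Fm_c' hab⟩
    · simp only [h]
      exact Or.inr ⟨Fm_c' hab.symm, Fm_c⟩
  · intro n
    show IsImage (Fm (Wseq a b w n 0)) (DwC (oth a b (Wseq a b w n 0)) (Wseq a b w n))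
      (Wseq a b w n)
    rcases hA (Wseq a b w n 0) with h | h
    · rw [h, hotha]
      exact image_step hab hA h (hprop n)
    · rw [h, hothb]
      exact image_step hab.symm hA2b h (hprop n)

end LSPAux

theorem binary_lsp_characterization {A : Type*} (a b : A) (hab : a ≠ b)
    (hA : ∀ x : A, x = a ∨ x = b) (w : ℕ → A) :
    LSPInf w ↔
      ∃ (f : ℕ → A → List A) (W : ℕ → ℕ → A),
        (∀ n, (f n a = [a] ∧ f n b = [a, b]) ∨ (f n a = [b, a] ∧ f n b = [b])) ∧
        W 0 = w ∧ ∀ n, IsImage (f n) (W (n + 1)) (W n) := by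
  constructor
  · intro hw
    exact LSPAux.forward a b hab hA w hw
  · rintro ⟨f, W, hf, hW0, him⟩
    have := LSPAux.backward a b hab hA f W hf him
    rwa [hW0] at this
end
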